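/- arXiv:1712.08380 — 6 statements merged into one kernel-verified Lean document; each statement's English description precedes it below -/
import Mathlib

section
/- Let r > 0, a ∈ ℝ², and α ∈ ℝ \ ℤ. Then for every smooth function u : ℝ² → ℂ whose support is compact and contained in D_r(a) \ {a}, one has ∫_{D_r(a)} |u(x)|² dx ≤ (r² / (min_{j∈ℤ} |j − α|)²) · ∫_{D_r(a)} ‖i∇u(x) + A_a^α(x)·u(x)‖² dx, where i∇u + A_a^α u denotes the ℂ²-valued function whose k-th component is i·∂_k u + (A_a^α)_k·u. -/
open MeasureTheory Complex

lemma cs_aux (p q ee ff A : ℝ) :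
    |2*(p*ee + q*ff)| ≤ 2 * Real.sqrt (p^2+q^2) * Real.sqrt ((A*p - ff)^2 + (ee + A*q)^2) := by
  have hs1 : Real.sqrt (p^2+q^2)^2 = p^2+q^2 := Real.sq_sqrt (by positivity)
  have hs2 : Real.sqrt ((A*p - ff)^2 + (ee + A*q)^2)^2 = (A*p - ff)^2 + (ee + A*q)^2 :=
    Real.sq_sqrt (by positivity)
  have h1 : (2*(p*ee+q*ff))^2 ≤ (2*Real.sqrt (p^2+q^2) * Real.sqrt ((A*p - ff)^2 + (ee + A*q)^2))^2 := by
    nlinarith [sq_nonneg (p*(ff-A*p) - q*(ee+A*q)), sq_nonneg (p*(ee+A*q) + q*(ff-A*p))]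
  calc |2*(p*ee+q*ff)| = Real.sqrt ((2*(p*ee+q*ff))^2) := (Real.sqrt_sq_eq_abs _).symm
    _ ≤ Real.sqrt ((2*Real.sqrt (p^2+q^2) * Real.sqrt ((A*p - ff)^2 + (ee + A*q)^2))^2) :=
        Real.sqrt_le_sqrt h1
    _ = 2 * Real.sqrt (p^2+q^2) * Real.sqrt ((A*p - ff)^2 + (ee + A*q)^2) :=
        Real.sqrt_sq (by positivity)

lemma normsq_c (z : ℂ) : ‖z‖^2 = z.re^2 + z.im^2 := by
  rw [Complex.sq_norm, Complex.normSq_apply]; ring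

lemma oneD (r c : ℝ) (hr : 0 < r) (f f' : ℝ → ℂ) (g : ℝ → ℝ)
    (hf : ∀ t, HasDerivAt f (f' t) t)
    (hfc : Continuous f) (hf'c : Continuous f') (hgc : Continuous g)
    (hbound : ∀ t, |2 * ((f t).re * (f' t).re + (f t).im * (f' t).im)| ≤ 2 * ‖f t‖ * g t)
    (hvanish : ∀ t, t ∉ Set.Ioo (c - r) (c + r) → f t = 0) :
    ∫ t in Set.Ioo (c-r) (c+r), ‖f t‖^2 ≤ 4 * r^2 * ∫ t in Set.Ioo (c-r) (c+r), (g t)^2 := by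
  set w : ℝ → ℝ := fun t => (f t).re^2 + (f t).im^2 with hwdef
  clear_value w
  set w' : ℝ → ℝ := fun t => 2 * ((f t).re * (f' t).re + (f t).im * (f' t).im) with hw'def
  clear_value w'
  set φ : ℝ → ℝ := fun s => 2 * ‖f s‖ * g s with hφdef
  clear_value φ
  have hwnorm : ∀ t, w t = ‖f t‖^2 := by
    intro t; rw [hwdef]; exact (normsq_c (f t)).symm
  have hw : ∀ t, HasDerivAt w (w' t) t := by
    intro t
    have hre : HasDerivAt (fun s => (f s).re) ((f' t).re) t :=
      Complex.reCLM.hasFDerivAt.comp_hasDerivAt t (hf t)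
    have him : HasDerivAt (fun s => (f s).im) ((f' t).im) t :=
      Complex.imCLM.hasFDerivAt.comp_hasDerivAt t (hf t)
    have h2 := (hre.fun_pow 2).fun_add (him.fun_pow 2)
    rw [hwdef, hw'def]
    refine h2.congr_deriv ?_
    ring
  have hwc : Continuous w := by rw [hwdef]; fun_prop
  have hw'c : Continuous w' := by rw [hw'def]; fun_prop
  have hφc : Continuous φ := by rw [hφdef]; fun_prop
  have hφb : ∀ s, |w' s| ≤ φ s := by
    intro s; rw [hw'def, hφdef]; exact hbound s
  have hle : c - r ≤ c + r := by linarith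
  have hwl : w (c - r) = 0 := by
    have h0 := hvanish (c - r) (by simp)
    rw [hwdef]; simp [h0]
  have hwr : w (c + r) = 0 := by
    have h0 := hvanish (c + r) (by simp)
    rw [hwdef]; simp [h0]
  set Φ : ℝ := ∫ s in (c-r)..(c+r), φ s with hΦdef
  clear_value Φ
  have key : ∀ t ∈ Set.Ioo (c-r) (c+r), 2 * w t ≤ Φ := by
    intro t ht
    have h1 : ∫ s in (c-r)..t, w' s = w t := by
      rw [intervalIntegral.integral_eq_sub_of_hasDerivAt (fun s _ => hw s)
        (hw'c.intervalIntegrable _ _), hwl, sub_zero]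
    have h2 : ∫ s in t..(c+r), (-(w' s)) = w t := by
      rw [intervalIntegral.integral_neg,
        intervalIntegral.integral_eq_sub_of_hasDerivAt (fun s _ => hw s)
        (hw'c.intervalIntegrable _ _), hwr, zero_sub, neg_neg]
    have hb1 : w t ≤ ∫ s in (c-r)..t, φ s := by
      rw [← h1]
      exact intervalIntegral.integral_mono_on ht.1.le (hw'c.intervalIntegrable _ _)
        (hφc.intervalIntegrable _ _) (fun s _ => (le_abs_self _).trans (hφb s))
    have hb2 : w t ≤ ∫ s in t..(c+r), φ s := by
      rw [← h2]
      exact intervalIntegral.integral_mono_on ht.2.le ((hw'c.neg).intervalIntegrable _ _)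
        (hφc.intervalIntegrable _ _) (fun s _ => (neg_le_abs _).trans (hφb s))
    have hadd : (∫ s in (c-r)..t, φ s) + ∫ s in t..(c+r), φ s = Φ := by
      rw [hΦdef]
      exact intervalIntegral.integral_add_adjacent_intervals (hφc.intervalIntegrable _ _)
        (hφc.intervalIntegrable _ _)
    linarith
  set W : ℝ := ∫ t in Set.Ioo (c-r) (c+r), w t with hWdef
  clear_value W
  set G : ℝ := ∫ t in Set.Ioo (c-r) (c+r), (g t)^2 with hGdef
  clear_value G
  have hWint : IntegrableOn w (Set.Ioo (c-r) (c+r)) :=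
    (hwc.integrableOn_Icc).mono_set Set.Ioo_subset_Icc_self
  have hvol : (volume (Set.Ioo (c-r) (c+r))).toReal = 2*r := by
    rw [Real.volume_Ioo, ENNReal.toReal_ofReal (by linarith)]; ring
  have hWΦ : W ≤ r * Φ := by
    have h1 : ∫ t in Set.Ioo (c-r) (c+r), w t ≤ ∫ _t in Set.Ioo (c-r) (c+r), (Φ/2) := by
      apply setIntegral_mono_on hWint (integrableOn_const (by
        rw [Real.volume_Ioo]; exact ENNReal.ofReal_ne_top)) measurableSet_Ioo
      intro t ht
      linarith [key t ht]
    rw [← hWdef] at h1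
    rw [setIntegral_const, measureReal_def, hvol, smul_eq_mul] at h1
    linarith
  have hΦW : 2*r*Φ ≤ W + 4*r^2*G := by
    have hpt : ∀ s ∈ Set.Icc (c-r) (c+r), 2*r*φ s ≤ w s + 4*r^2*(g s)^2 := by
      intro s _
      have h := sq_nonneg (‖f s‖ - 2*r*g s)
      have hws : w s = ‖f s‖^2 := hwnorm s
      rw [hws]
      simp only [hφdef]
      nlinarith
    have h1 : ∫ s in (c-r)..(c+r), 2*r*φ s ≤ ∫ s in (c-r)..(c+r), (w s + 4*r^2*(g s)^2) :=
      intervalIntegral.integral_mono_on hle ((continuous_const.mul hφc).intervalIntegrable _ _)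
        ((hwc.add (continuous_const.mul (hgc.pow 2))).intervalIntegrable _ _) hpt
    rw [intervalIntegral.integral_const_mul] at h1
    have h2 : ∫ s in (c-r)..(c+r), (w s + 4*r^2*(g s)^2) = W + 4*r^2*G := by
      rw [intervalIntegral.integral_add (g := fun s => 4*r^2*(g s)^2) (hwc.intervalIntegrable _ _)
        ((continuous_const.mul (hgc.pow 2)).intervalIntegrable _ _ : IntervalIntegrable (fun s => 4*r^2*(g s)^2) volume (c-r) (c+r)),
        intervalIntegral.integral_const_mul,
        intervalIntegral.integral_of_le hle, intervalIntegral.integral_of_le hle,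
        integral_Ioc_eq_integral_Ioo, integral_Ioc_eq_integral_Ioo, hWdef, hGdef]
    rw [h2, ← hΦdef] at h1
    linarith
  have hfin : W ≤ 4*r^2*G := by linarith
  calc ∫ t in Set.Ioo (c-r) (c+r), ‖f t‖^2
      = W := by
        rw [hWdef]
        exact setIntegral_congr_fun measurableSet_Ioo (fun t _ => (hwnorm t).symm)
    _ ≤ 4*r^2*G := hfin
lemma inf_pos_le_half (α : ℝ) (hα : ∀ j : ℤ, α ≠ (j:ℝ)) :
    0 < (⨅ j : ℤ, |(j : ℝ) - α|) ∧ (⨅ j : ℤ, |(j : ℝ) - α|) ≤ 1/2 := by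
  have hb : BddBelow (Set.range fun j : ℤ => |(j:ℝ) - α|) :=
    ⟨0, by rintro x ⟨j, rfl⟩; exact abs_nonneg _⟩
  have hfl : (⌊α⌋ : ℝ) < α := lt_of_le_of_ne (Int.floor_le α) (fun h => hα ⌊α⌋ h.symm)
  have hcl : α < (⌊α⌋ : ℝ) + 1 := Int.lt_floor_add_one α
  constructor
  · have hlow : ∀ j : ℤ, min (α - (⌊α⌋:ℝ)) ((⌊α⌋:ℝ) + 1 - α) ≤ |(j:ℝ) - α| := by
      intro j
      rcases le_or_gt j ⌊α⌋ with h | h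
      · have hj : (j:ℝ) ≤ (⌊α⌋:ℝ) := by exact_mod_cast h
        rw [_root_.abs_of_nonpos (by linarith : (j:ℝ) - α ≤ 0)]
        have := min_le_left (α - (⌊α⌋:ℝ)) ((⌊α⌋:ℝ) + 1 - α)
        linarith
      · have hj' : (⌊α⌋:ℤ) + 1 ≤ j := h
        have hj : (⌊α⌋:ℝ) + 1 ≤ (j:ℝ) := by exact_mod_cast hj'
        rw [_root_.abs_of_nonneg (by linarith : (0:ℝ) ≤ (j:ℝ) - α)]
        have := min_le_right (α - (⌊α⌋:ℝ)) ((⌊α⌋:ℝ) + 1 - α)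
        linarith
    have h := le_ciInf hlow
    have hmin : 0 < min (α - (⌊α⌋:ℝ)) ((⌊α⌋:ℝ) + 1 - α) := lt_min (by linarith) (by linarith)
    linarith
  · have h1 : (⨅ j : ℤ, |(j:ℝ) - α|) ≤ |((⌊α⌋:ℤ):ℝ) - α| := ciInf_le hb ⌊α⌋
    have h2 : (⨅ j : ℤ, |(j:ℝ) - α|) ≤ |((⌊α⌋+1 : ℤ):ℝ) - α| := ciInf_le hb (⌊α⌋+1)
    have hc : ((⌊α⌋+1:ℤ):ℝ) = (⌊α⌋:ℝ)+1 := by push_cast; ring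
    rw [_root_.abs_of_nonpos (by linarith : (⌊α⌋:ℝ) - α ≤ 0)] at h1
    rw [hc, _root_.abs_of_nonneg (by linarith : (0:ℝ) ≤ (⌊α⌋:ℝ) + 1 - α)] at h2
    linarith


/-- Poincaré-type inequality for Aharonov–Bohm operators with non-integer circulation:
for `r > 0`, `a ∈ ℝ² ≅ ℂ`, `α ∈ ℝ \ ℤ`, and every smooth compactly supported `u`
with support contained in `D_r(a) \ {a}`,
`∫_{D_r(a)} |u|² ≤ (r² / (min_{j∈ℤ} |j − α|)²) ∫_{D_r(a)} ‖(i∇ + A_a^α)u‖²`. -/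
theorem poincare_type_inequality
    (r : ℝ) (hr : 0 < r) (a : ℂ) (α : ℝ) (hα : ∀ j : ℤ, α ≠ (j : ℝ)) (u : ℂ → ℂ)
    (hu : ContDiff ℝ (⊤ : ℕ∞) u) (hcs : HasCompactSupport u)
    (hsupp : tsupport u ⊆ Metric.ball a r \ {a}) :
    ∫ x in Metric.ball a r, ‖u x‖ ^ 2 ≤
      (r ^ 2 / (⨅ j : ℤ, |(j : ℝ) - α|) ^ 2) *
        ∫ x in Metric.ball a r,
          (‖Complex.I * fderiv ℝ u x 1 +
              ((α * (-(x - a).im / ‖x - a‖ ^ 2) : ℝ) : ℂ) * u x‖ ^ 2 +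
           ‖Complex.I * fderiv ℝ u x Complex.I +
              ((α * ((x - a).re / ‖x - a‖ ^ 2) : ℝ) : ℂ) * u x‖ ^ 2) := by
  have hone : (1 : WithTop ℕ∞) ≤ ((⊤ : ℕ∞) : WithTop ℕ∞) := by exact_mod_cast le_top
  have huc : Continuous u := hu.continuous
  have hud : Differentiable ℝ u := hu.differentiable (lt_of_lt_of_le zero_lt_one hone).ne'
  have hdc : Continuous (fderiv ℝ u) := hu.continuous_fderiv (lt_of_lt_of_le zero_lt_one hone).ne'
  -- vanishing facts
  have hnots : ∀ x, x ∉ tsupport u → u x = 0 := fun x hx => image_eq_zero_of_notMem_tsupport hx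
  have hnotd : ∀ x, x ∉ tsupport u → fderiv ℝ u x = 0 := by
    intro x hx
    by_contra h
    exact hx (support_fderiv_subset ℝ (Function.mem_support.2 h))
  have hball : ∀ x, x ∉ Metric.ball a r → x ∉ tsupport u := by
    intro x hx hmem
    exact hx (hsupp hmem).1
  -- the potential-times-u functions are continuous
  have hU0 : ∀ᶠ x in nhds a, u x = 0 := by
    have ha : a ∉ tsupport u := fun h => (hsupp h).2 rfl
    filter_upwards [(isClosed_tsupport u).isOpen_compl.mem_nhds ha] with x hx
    exact hnots x hx
  have hcoef : ∀ q : ℂ → ℝ, (∀ x, x ≠ a → ContinuousAt q x) →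
      Continuous (fun x => ((q x : ℝ) : ℂ) * u x) := by
    intro q hq
    rw [continuous_iff_continuousAt]
    intro x
    rcases eq_or_ne x a with rfl | hx
    · have h0 : (fun y => ((q y : ℝ) : ℂ) * u y) =ᶠ[nhds x] (fun _ => (0:ℂ)) := by
        filter_upwards [hU0] with y hy
        simp [hy]
      exact ContinuousAt.congr continuousAt_const h0.symm
    · exact ((Complex.continuous_ofReal.continuousAt).comp (hq x hx)).mul huc.continuousAt
  have hqc : ∀ v : ℂ → ℝ, Continuous v →
      ∀ x : ℂ, x ≠ a → ContinuousAt (fun x => α * (v x / ‖x - a‖^2)) x := by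
    intro v hv x hx
    have hne : ‖x - a‖^2 ≠ 0 := by
      apply pow_ne_zero
      simpa [norm_ne_zero_iff, sub_ne_zero] using hx
    exact (continuousAt_const.mul ((hv.continuousAt).div
      (((continuous_id.sub continuous_const).norm.pow 2).continuousAt) hne))
  set A1 : ℂ → ℝ := fun x => α * (-(x - a).im / ‖x - a‖ ^ 2) with hA1def
  set A2 : ℂ → ℝ := fun x => α * ((x - a).re / ‖x - a‖ ^ 2) with hA2def
  have hA1c : Continuous (fun x => ((A1 x : ℝ) : ℂ) * u x) := by
    apply hcoef
    intro x hx
    exact hqc (fun x => -(x - a).im) (by fun_prop) x hx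
  have hA2c : Continuous (fun x => ((A2 x : ℝ) : ℂ) * u x) := by
    apply hcoef
    intro x hx
    exact hqc (fun x => (x - a).re) (by fun_prop) x hx
  set Φ1 : ℂ → ℂ := fun x => Complex.I * fderiv ℝ u x 1 + ((A1 x : ℝ) : ℂ) * u x with hΦ1def
  set Φ2 : ℂ → ℂ := fun x => Complex.I * fderiv ℝ u x Complex.I + ((A2 x : ℝ) : ℂ) * u x with hΦ2def
  have hΦ1c : Continuous Φ1 :=
    (continuous_const.mul (hdc.clm_apply continuous_const)).add hA1c
  have hΦ2c : Continuous Φ2 :=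
    (continuous_const.mul (hdc.clm_apply continuous_const)).add hA2c
  have hΦ0 : ∀ x, x ∉ tsupport u → (Φ1 x = 0 ∧ Φ2 x = 0) := by
    intro x hx
    rw [hΦ1def, hΦ2def]
    simp [hnots x hx, hnotd x hx]
  set F : ℂ → ℝ := fun x => ‖u x‖^2 with hFdef
  set G1 : ℂ → ℝ := fun x => ‖Φ1 x‖^2 with hG1def
  set G2 : ℂ → ℝ := fun x => ‖Φ2 x‖^2 with hG2def
  have hFc : Continuous F := by fun_prop
  have hG1c : Continuous G1 := by rw [hG1def]; fun_prop
  have hG2c : Continuous G2 := by rw [hG2def]; fun_prop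
  have hFcs : HasCompactSupport F := by
    apply HasCompactSupport.intro hcs
    intro x hx; rw [hFdef]; simp [hnots x hx]
  have hG1cs : HasCompactSupport G1 := by
    apply HasCompactSupport.intro hcs
    intro x hx; rw [hG1def]; simp [(hΦ0 x hx).1]
  have hG2cs : HasCompactSupport G2 := by
    apply HasCompactSupport.intro hcs
    intro x hx; rw [hG2def]; simp [(hΦ0 x hx).2]
  have hFint : Integrable F := hFc.integrable_of_hasCompactSupport hFcs
  have hG1int : Integrable G1 := hG1c.integrable_of_hasCompactSupport hG1cs
  have hG2int : Integrable G2 := hG2c.integrable_of_hasCompactSupport hG2cs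
  -- Fubini machinery
  have hsymm : ∀ p : ℝ × ℝ, (Complex.measurableEquivRealProd.symm p) = (p.1:ℂ) + (p.2:ℂ)*Complex.I := by
    intro p
    apply Complex.ext <;> simp [Complex.measurableEquivRealProd_symm_apply]
  have hmp : MeasurePreserving (⇑Complex.measurableEquivRealProd.symm) volume volume :=
    Complex.volume_preserving_equiv_real_prod.symm
  have hprod : ∀ h : ℂ → ℝ, Integrable h →
      Integrable (fun p : ℝ × ℝ => h ((p.1:ℂ) + (p.2:ℂ)*Complex.I)) (volume.prod volume) := by
    intro h hint
    have h2 := (hmp.integrable_comp_emb Complex.measurableEquivRealProd.symm.measurableEmbedding).2 hint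
    have heq : (h ∘ ⇑Complex.measurableEquivRealProd.symm)
        = fun p : ℝ × ℝ => h ((p.1:ℂ) + (p.2:ℂ)*Complex.I) :=
      funext fun p => by rw [Function.comp_apply, hsymm]
    rw [heq] at h2
    exact h2
  have hfub : ∀ h : ℂ → ℝ, Integrable h →
      (∫ z, h z) = ∫ x : ℝ, ∫ y : ℝ, h ((x:ℂ) + (y:ℂ)*Complex.I) := by
    intro h hint
    have h1 : ∫ p : ℝ × ℝ, h (Complex.measurableEquivRealProd.symm p) = ∫ z, h z :=
      hmp.integral_comp Complex.measurableEquivRealProd.symm.measurableEmbedding h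
    rw [← h1]
    have h2 := MeasureTheory.integral_prod _ (hprod h hint)
    calc ∫ p : ℝ × ℝ, h (Complex.measurableEquivRealProd.symm p)
        = ∫ p : ℝ × ℝ, h ((p.1:ℂ) + (p.2:ℂ)*Complex.I) := by
          congr 1; funext p; rw [hsymm]
      _ = ∫ x : ℝ, ∫ y : ℝ, h ((x:ℂ) + (y:ℂ)*Complex.I) := h2
  -- the line inequality
  have hline : ∀ x : ℝ, (∫ y : ℝ, F ((x:ℂ) + (y:ℂ)*Complex.I))
      ≤ 4*r^2 * ∫ y : ℝ, G2 ((x:ℂ) + (y:ℂ)*Complex.I) := by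
    intro x
    set ℓ : ℝ → ℂ := fun y => (x:ℂ) + (y:ℂ)*Complex.I with hℓdef
    have hℓc : Continuous ℓ := by rw [hℓdef]; fun_prop
    have hder : ∀ y : ℝ, HasDerivAt ℓ Complex.I y := by
      intro y
      have h1 : HasDerivAt (fun t : ℝ => ((t:ℝ):ℂ)) 1 y := by
        simpa using (hasDerivAt_id y).ofReal_comp
      rw [hℓdef]
      simpa using (h1.mul_const Complex.I).const_add (x:ℂ)
    set f : ℝ → ℂ := fun y => u (ℓ y) with hfdef
    set f' : ℝ → ℂ := fun y => fderiv ℝ u (ℓ y) Complex.I with hf'def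
    set g : ℝ → ℝ := fun y => ‖Φ2 (ℓ y)‖ with hgdef
    have hf : ∀ y, HasDerivAt f (f' y) y := by
      intro y
      exact ((hud (ℓ y)).hasFDerivAt).comp_hasDerivAt y (hder y)
    have hfc : Continuous f := huc.comp hℓc
    have hf'c : Continuous f' := (hdc.clm_apply continuous_const).comp hℓc
    have hgc : Continuous g := (hΦ2c.norm).comp hℓc
    have hout : ∀ y : ℝ, y ∉ Set.Ioo (a.im - r) (a.im + r) → ℓ y ∉ Metric.ball a r := by
      intro y hy
      rw [Set.mem_Ioo] at hy
      push_neg at hy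
      have him : (ℓ y - a).im = y - a.im := by rw [hℓdef]; simp
      have habs : |y - a.im| ≤ ‖ℓ y - a‖ := him ▸ Complex.abs_im_le_norm (ℓ y - a)
      have hge : r ≤ |y - a.im| := by
        rcases lt_or_ge (a.im - r) y with h1 | h1
        · have h2 := hy h1
          rw [_root_.abs_of_nonneg (by linarith : (0:ℝ) ≤ y - a.im)]
          linarith
        · rw [_root_.abs_of_nonpos (by linarith : y - a.im ≤ 0)]
          linarith
      rw [Metric.mem_ball, Complex.dist_eq]
      push_neg
      linarith [habs]
    have hvan : ∀ y : ℝ, y ∉ Set.Ioo (a.im - r) (a.im + r) → f y = 0 := by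
      intro y hy
      exact hnots _ (hball _ (hout y hy))
    have hbd : ∀ y, |2 * ((f y).re * (f' y).re + (f y).im * (f' y).im)| ≤ 2 * ‖f y‖ * g y := by
      intro y
      set z := ℓ y with hzdef
      set d : ℂ := fderiv ℝ u z Complex.I with hddef
      have h1 : ‖u z‖ = Real.sqrt ((u z).re^2 + (u z).im^2) := by
        rw [← normsq_c]
        exact (Real.sqrt_sq (norm_nonneg _)).symm
      have hre : (Φ2 z).re = A2 z * (u z).re - d.im := by
        rw [hΦ2def]
        simp [Complex.add_re, Complex.mul_re]
        try ring
      have him : (Φ2 z).im = d.re + A2 z * (u z).im := by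
        rw [hΦ2def]
        simp [Complex.add_im, Complex.mul_im]
        try ring
      have h2 : ‖Φ2 z‖ = Real.sqrt ((A2 z * (u z).re - d.im)^2 + (d.re + A2 z * (u z).im)^2) := by
        rw [← hre, ← him, ← normsq_c]
        exact (Real.sqrt_sq (norm_nonneg _)).symm
      have hcs2 := cs_aux (u z).re (u z).im d.re d.im (A2 z)
      show |2 * ((u z).re * d.re + (u z).im * d.im)| ≤ 2 * ‖u z‖ * ‖Φ2 z‖
      rw [h1, h2]
      exact hcs2
    have hone := oneD r a.im hr f f' g hf hfc hf'c hgc hbd hvan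
    have hz2 : ∀ y : ℝ, y ∉ Set.Ioo (a.im - r) (a.im + r) → G2 (ℓ y) = 0 := by
      intro y hy
      rw [hG2def]
      simp [(hΦ0 _ (hball _ (hout y hy))).2]
    have e1 : ∫ y : ℝ, F (ℓ y) = ∫ y in Set.Ioo (a.im - r) (a.im + r), ‖f y‖^2 := by
      rw [← setIntegral_eq_integral_of_forall_compl_eq_zero
        (fun y hy => by rw [hFdef]; show ‖f y‖^2 = 0; rw [hvan y hy]; simp)]
    have e2 : ∫ y : ℝ, G2 (ℓ y) = ∫ y in Set.Ioo (a.im - r) (a.im + r), (g y)^2 := by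
      rw [← setIntegral_eq_integral_of_forall_compl_eq_zero
        (fun y hy => by show (g y)^2 = 0; rw [hgdef]; simp [(hΦ0 _ (hball _ (hout y hy))).2])]
    show ∫ y : ℝ, F (ℓ y) ≤ 4*r^2 * ∫ y : ℝ, G2 (ℓ y)
    rw [e1, e2]
    exact hone
  -- global inequality
  have hmain : ∫ z, F z ≤ 4*r^2 * ∫ z, G2 z := by
    rw [hfub F hFint, hfub G2 hG2int, ← MeasureTheory.integral_const_mul]
    apply integral_mono ((hprod F hFint).integral_prod_left)
      (((hprod G2 hG2int).integral_prod_left).const_mul (4*r^2))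
    intro x
    exact hline x
  -- final assembly
  have hm := inf_pos_le_half α hα
  have h4 : 4*r^2 ≤ r^2 / (⨅ j : ℤ, |(j:ℝ) - α|)^2 := by
    have hq : 0 < (⨅ j : ℤ, |(j:ℝ) - α|)^2 := pow_pos hm.1 2
    have hm2 : (⨅ j : ℤ, |(j:ℝ) - α|)^2 ≤ 1/4 := by nlinarith [hm.1, hm.2]
    rw [le_div_iff₀ hq]
    nlinarith [hm2, sq_nonneg r]
  have hLHS : ∫ x in Metric.ball a r, F x = ∫ z, F z := by
    apply setIntegral_eq_integral_of_forall_compl_eq_zero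
    intro x hx
    rw [hFdef]
    simp [hnots x (hball x hx)]
  have hRHS : ∫ x in Metric.ball a r, (G1 x + G2 x) = ∫ z, (G1 z + G2 z) := by
    apply setIntegral_eq_integral_of_forall_compl_eq_zero
    intro x hx
    rw [hG1def, hG2def]
    simp [(hΦ0 x (hball x hx)).1, (hΦ0 x (hball x hx)).2]
  have hGsum : ∫ z, (G1 z + G2 z) = (∫ z, G1 z) + ∫ z, G2 z := integral_add hG1int hG2int
  have hG1nn : 0 ≤ ∫ z, G1 z := integral_nonneg (fun z => by rw [hG1def]; positivity)
  have hGsum_nn : 0 ≤ ∫ z, (G1 z + G2 z) :=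
    integral_nonneg (fun z => by rw [hG1def, hG2def]; positivity)
  show ∫ x in Metric.ball a r, F x ≤
      (r^2 / (⨅ j : ℤ, |(j:ℝ) - α|)^2) * ∫ x in Metric.ball a r, (G1 x + G2 x)
  rw [hLHS, hRHS]
  calc ∫ z, F z ≤ 4*r^2 * ∫ z, G2 z := hmain
    _ ≤ 4*r^2 * ∫ z, (G1 z + G2 z) := by
        rw [hGsum]
        nlinarith [hG1nn, hr]
    _ ≤ (r^2 / (⨅ j : ℤ, |(j:ℝ) - α|)^2) * ∫ z, (G1 z + G2 z) :=
        mul_le_mul_of_nonneg_right h4 hGsum_nn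
end

section
/- Let λ ∈ ℝ and let ψ : ℂ → ℂ be twice continuously differentiable on B(0,1) \ {0}, odd (ψ(−y) = −ψ(y) for all y ∈ B(0,1) \ {0}), and satisfy −Δψ(y) = 4λ·‖y‖²·ψ(y) for all y ∈ B(0,1) \ {0}. Suppose φ : B(0,1) \ {0} → ℂ satisfies φ(y²) = (y/‖y‖)·ψ(y) for every y ∈ B(0,1) \ {0} (such a φ exists by oddness of ψ). Then φ is twice continuously differentiable on B(0,1) \ {0} and solves −Δφ(x) + 2i·Dφ(x)[A₀(x)] + ‖A₀(x)‖²·φ(x) = λ·φ(x) for all x ∈ B(0,1) \ {0}; moreover, if ψ is real-valued then φ satisfies the K₀-reality condition (x/‖x‖)·conj(φ(x)) = φ(x) on B(0,1) \ {0}. -/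
open Complex
open Filter

/-- The pointwise Euclidean Laplacian on `ℝ² ≅ ℂ` of a complex-valued function,
as the sum of the second directional derivatives in the directions `1` and `I`. -/
noncomputable def lapC (f : ℂ → ℂ) (x : ℂ) : ℂ :=
  fderiv ℝ (fun y => fderiv ℝ f y 1) x 1 +
    fderiv ℝ (fun y => fderiv ℝ f y Complex.I) x Complex.I

/-- The Aharonov–Bohm potential with pole `0` and circulation `1/2`:
`A₀(x) = (1/2)·(−x₂, x₁)/‖x‖²`, written in complex notation as `(I·x)/(2‖x‖²)`. -/
noncomputable def A0 (x : ℂ) : ℂ := (Complex.I * x) / (2 * (‖x‖ : ℂ) ^ 2)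

noncomputable def Pc (y : ℂ) : ℂ →L[ℝ] ℝ := y.re • Complex.reCLM + y.im • Complex.imCLM

lemma Pc_apply (y v : ℂ) : Pc y v = y.re * v.re + y.im * v.im := by
  simp [Pc]

lemma hasFDerivAt_normSq (y : ℂ) :
    HasFDerivAt (fun z : ℂ => Complex.normSq z) ((2:ℝ) • Pc y) y := by
  have h : HasFDerivAt (fun z : ℂ => z.re * z.re + z.im * z.im)
      ((y.re • Complex.reCLM + y.re • Complex.reCLM) +
        (y.im • Complex.imCLM + y.im • Complex.imCLM)) y := by
    exact ((Complex.reCLM.hasFDerivAt.mul Complex.reCLM.hasFDerivAt).add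
      (Complex.imCLM.hasFDerivAt.mul Complex.imCLM.hasFDerivAt))
  have h2 : (fun z : ℂ => z.re * z.re + z.im * z.im) = fun z : ℂ => Complex.normSq z := by
    funext z; rw [Complex.normSq_apply]
  rw [h2] at h
  refine h.congr_fderiv ?_
  ext v <;> simp [Pc] <;> ring

lemma hasFDerivAt_cnorm {y : ℂ} (hy : y ≠ 0) :
    HasFDerivAt (fun z : ℂ => ‖z‖) (‖y‖⁻¹ • Pc y) y := by
  have hq : Complex.normSq y ≠ 0 := by simpa [Complex.normSq_eq_zero] using hy
  have h := (Real.hasDerivAt_sqrt hq).comp_hasFDerivAt y (hasFDerivAt_normSq y)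
  have h2 : ((fun x => Real.sqrt x) ∘ fun z : ℂ => Complex.normSq z) = fun z : ℂ => ‖z‖ := by
    funext z; simp [Complex.norm_def, Function.comp]
  rw [h2] at h
  refine h.congr_fderiv ?_
  have hn : Real.sqrt (Complex.normSq y) = ‖y‖ := by
    simp [Complex.norm_def]
  rw [smul_smul, hn]
  congr 1
  have : ‖y‖ ≠ 0 := norm_ne_zero_iff.mpr hy
  field_simp

lemma hasFDerivAt_invnorm {y : ℂ} (hy : y ≠ 0) :
    HasFDerivAt (fun z : ℂ => ‖z‖⁻¹) ((-(‖y‖⁻¹^3)) • Pc y) y := by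
  have h := (hasDerivAt_inv (norm_ne_zero_iff.mpr hy)).comp_hasFDerivAt y (hasFDerivAt_cnorm hy)
  have h2 : ((fun x : ℝ => x⁻¹) ∘ fun z : ℂ => ‖z‖) = fun z : ℂ => ‖z‖⁻¹ := rfl
  rw [h2] at h
  refine h.congr_fderiv ?_
  rw [smul_smul]
  congr 1
  have : ‖y‖ ≠ 0 := norm_ne_zero_iff.mpr hy
  field_simp

lemma hasFDerivAt_ccoe {y : ℂ} (hy : y ≠ 0) :
    HasFDerivAt (fun z : ℂ => ((‖z‖⁻¹ : ℝ) : ℂ))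
      (Complex.ofRealCLM.comp ((-(‖y‖⁻¹^3)) • Pc y)) y :=
  Complex.ofRealCLM.hasFDerivAt.comp y (hasFDerivAt_invnorm hy)

noncomputable def uu (y : ℂ) : ℂ := y / (‖y‖ : ℂ)

noncomputable def U' (y : ℂ) : ℂ →L[ℝ] ℂ :=
  y • (Complex.ofRealCLM.comp ((-(‖y‖⁻¹^3)) • Pc y)) +
    ((‖y‖⁻¹ : ℝ) : ℂ) • (ContinuousLinearMap.id ℝ ℂ)

lemma hasFDerivAt_uu {y : ℂ} (hy : y ≠ 0) : HasFDerivAt uu (U' y) y := by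
  have h := (hasFDerivAt_id y).mul (hasFDerivAt_ccoe hy)
  have h2 : (id * fun z : ℂ => ((‖z‖⁻¹ : ℝ) : ℂ)) = uu := by
    funext z; simp [uu, div_eq_mul_inv]
  rw [h2] at h
  exact h.congr_fderiv rfl

lemma U'_apply (y v : ℂ) :
    U' y v = ((‖y‖⁻¹ : ℝ) : ℂ) * v
      - ((‖y‖⁻¹^3 * (y.re * v.re + y.im * v.im) : ℝ) : ℂ) * y := by
  simp [U', Pc_apply]
  push_cast
  ring


lemma hasFDerivAt_pow3 {y : ℂ} (hy : y ≠ 0) :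
    HasFDerivAt (fun z : ℂ => ‖z‖⁻¹^3) ((-(3 * ‖y‖⁻¹^5)) • Pc y) y := by
  have h := (hasFDerivAt_invnorm hy).mul ((hasFDerivAt_invnorm hy).mul (hasFDerivAt_invnorm hy))
  have h2 : ((fun z : ℂ => ‖z‖⁻¹) * ((fun z : ℂ => ‖z‖⁻¹) * fun z : ℂ => ‖z‖⁻¹)) = fun z : ℂ => ‖z‖⁻¹^3 := by
    funext z; simp only [Pi.mul_apply]; ring
  rw [h2] at h
  refine h.congr_fderiv ?_
  ext v
  simp [Pc_apply]
  ring

/-- second derivative of `uu` in direction `1`. -/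
lemma fderiv2_uu_one {y : ℂ} (hy : y ≠ 0) :
    fderiv ℝ (fun z => fderiv ℝ uu z 1) y 1 =
      -2 * ((‖y‖⁻¹^3 * y.re : ℝ) : ℂ) - y * ((‖y‖⁻¹^3 - 3 * ‖y‖⁻¹^5 * y.re^2 : ℝ) : ℂ) := by
  have hev : (fun z => fderiv ℝ uu z 1) =ᶠ[nhds y] (fun z => U' z 1) := by
    filter_upwards [eventually_ne_nhds hy] with z hz
    rw [(hasFDerivAt_uu hz).fderiv]
  rw [hev.fderiv_eq]
  -- explicit formula for U' z 1
  have h2 : (fun z : ℂ => U' z 1) =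
      fun z : ℂ => ((‖z‖⁻¹ : ℝ) : ℂ) - ((‖z‖⁻¹^3 * z.re : ℝ) : ℂ) * z := by
    funext z; rw [U'_apply]; simp
  rw [h2]
  -- derivative of the explicit formula
  have hre : HasFDerivAt (fun z : ℂ => z.re) (Complex.reCLM : ℂ →L[ℝ] ℝ) y :=
    Complex.reCLM.hasFDerivAt
  have hm := (hasFDerivAt_pow3 hy).mul hre
  have hmc := Complex.ofRealCLM.hasFDerivAt.comp y hm
  have hprod := hmc.mul (hasFDerivAt_id y)
  have hF := (hasFDerivAt_ccoe hy).sub hprod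
  have hF' : HasFDerivAt (fun z : ℂ => ((‖z‖⁻¹ : ℝ) : ℂ) - ((‖z‖⁻¹^3 * z.re : ℝ) : ℂ) * z)
      (ofRealCLM.comp (-‖y‖⁻¹ ^ 3 • Pc y) -
        (((‖y‖⁻¹ ^ 3 * y.re : ℝ) : ℂ) • ContinuousLinearMap.id ℝ ℂ +
          y • ofRealCLM.comp (‖y‖⁻¹ ^ 3 • reCLM + y.re • -(3 * ‖y‖⁻¹ ^ 5) • Pc y))) y := hF
  rw [hF'.fderiv]
  simp [Pc_apply]
  push_cast
  ring

lemma fderiv2_uu_I {y : ℂ} (hy : y ≠ 0) :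
    fderiv ℝ (fun z => fderiv ℝ uu z Complex.I) y Complex.I =
      -2 * ((‖y‖⁻¹^3 * y.im : ℝ) : ℂ) * Complex.I
        - y * ((‖y‖⁻¹^3 - 3 * ‖y‖⁻¹^5 * y.im^2 : ℝ) : ℂ) := by
  have hev : (fun z => fderiv ℝ uu z Complex.I) =ᶠ[nhds y] (fun z => U' z Complex.I) := by
    filter_upwards [eventually_ne_nhds hy] with z hz
    rw [(hasFDerivAt_uu hz).fderiv]
  rw [hev.fderiv_eq]
  have h2 : (fun z : ℂ => U' z Complex.I) =
      fun z : ℂ => ((‖z‖⁻¹ : ℝ) : ℂ) * Complex.I - ((‖z‖⁻¹^3 * z.im : ℝ) : ℂ) * z := by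
    funext z; rw [U'_apply]; simp
  rw [h2]
  have him : HasFDerivAt (fun z : ℂ => z.im) (Complex.imCLM : ℂ →L[ℝ] ℝ) y :=
    Complex.imCLM.hasFDerivAt
  have hm := (hasFDerivAt_pow3 hy).mul him
  have hmc := Complex.ofRealCLM.hasFDerivAt.comp y hm
  have hprod := hmc.mul (hasFDerivAt_id y)
  have hF := ((hasFDerivAt_ccoe hy).mul_const Complex.I).sub hprod
  have hF' : HasFDerivAt
      (fun z : ℂ => ((‖z‖⁻¹ : ℝ) : ℂ) * Complex.I - ((‖z‖⁻¹^3 * z.im : ℝ) : ℂ) * z)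
      (Complex.I • ofRealCLM.comp (-‖y‖⁻¹ ^ 3 • Pc y) -
        (((‖y‖⁻¹ ^ 3 * y.im : ℝ) : ℂ) • ContinuousLinearMap.id ℝ ℂ +
          y • ofRealCLM.comp (‖y‖⁻¹ ^ 3 • imCLM + y.im • -(3 * ‖y‖⁻¹ ^ 5) • Pc y))) y := hF
  rw [hF'.fderiv]
  simp [Pc_apply]
  ring

lemma lapC_uu {y : ℂ} (hy : y ≠ 0) :
    lapC uu y = -uu y / ((‖y‖ : ℝ) : ℂ)^2 := by
  have hr : (‖y‖ : ℝ) ≠ 0 := norm_ne_zero_iff.mpr hy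
  have hrc : ((‖y‖ : ℝ) : ℂ) ≠ 0 := by exact_mod_cast hr
  have hab : (y.re : ℂ) + (y.im : ℂ) * Complex.I = y := Complex.re_add_im y
  have h2 : (y.re : ℝ)^2 + (y.im : ℝ)^2 = ‖y‖^2 := by
    rw [Complex.sq_norm, Complex.normSq_apply]; ring
  have h2c : ((y.re : ℂ))^2 + ((y.im : ℂ))^2 = ((‖y‖ : ℝ) : ℂ)^2 := by
    exact_mod_cast congrArg (Complex.ofReal) h2
  rw [lapC, fderiv2_uu_one hy, fderiv2_uu_I hy, uu]
  have hrc' : ((‖y‖ : ℝ) : ℂ) ≠ 0 := by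
    simpa using hrc
  push_cast
  have h2c' : ((y.re : ℂ))^2 + ((y.im : ℂ))^2 = ((‖y‖ : ℝ) : ℂ)^2 := by
    simpa using h2c
  field_simp [hrc']
  linear_combination (-2*((‖y‖ : ℝ) : ℂ)^2) * hab
    + (3*y) * h2c'

lemma lapC_congr {f g : ℂ → ℂ} {x : ℂ} (h : f =ᶠ[nhds x] g) : lapC f x = lapC g x := by
  have hd : fderiv ℝ f =ᶠ[nhds x] fderiv ℝ g := h.fderiv (𝕜 := ℝ)
  have h1 : (fun y => fderiv ℝ f y 1) =ᶠ[nhds x] (fun y => fderiv ℝ g y 1) :=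
    hd.mono fun y hy => by simp only [hy]
  have hI : (fun y => fderiv ℝ f y Complex.I) =ᶠ[nhds x] (fun y => fderiv ℝ g y Complex.I) :=
    hd.mono fun y hy => by simp only [hy]
  rw [lapC, lapC, h1.fderiv_eq, hI.fderiv_eq]

/-- second directional derivative as an application of `fderiv ℝ (fderiv ℝ f)`. -/
lemma fderiv_fderiv_apply {f : ℂ → ℂ} {x : ℂ} (hf : DifferentiableAt ℝ (fderiv ℝ f) x)
    (v w : ℂ) :
    fderiv ℝ (fun y => fderiv ℝ f y v) x w = fderiv ℝ (fderiv ℝ f) x w v := by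
  have h := fderiv_clm_apply (𝕜 := ℝ) hf (differentiableAt_const v)
  rw [show (fun y => fderiv ℝ f y v) = fun y => (fderiv ℝ f y) ((fun _ : ℂ => v) y) from rfl, h]
  simp

lemma lapC_eq_fderiv_fderiv {f : ℂ → ℂ} {x : ℂ} (hf : DifferentiableAt ℝ (fderiv ℝ f) x) :
    lapC f x = fderiv ℝ (fderiv ℝ f) x 1 1 +
      fderiv ℝ (fderiv ℝ f) x Complex.I Complex.I := by
  rw [lapC, fderiv_fderiv_apply hf, fderiv_fderiv_apply hf]

lemma fderiv2_mul_dir {f g : ℂ → ℂ} {y₀ : ℂ}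
    (hf : ContDiffAt ℝ 2 f y₀) (hg : ContDiffAt ℝ 2 g y₀) (e : ℂ) :
    fderiv ℝ (fun y => fderiv ℝ (fun z => f z * g z) y e) y₀ e =
      fderiv ℝ (fun y => fderiv ℝ f y e) y₀ e * g y₀
        + 2 * (fderiv ℝ f y₀ e * fderiv ℝ g y₀ e)
        + f y₀ * fderiv ℝ (fun y => fderiv ℝ g y e) y₀ e := by
  have hfev : ∀ᶠ y in nhds y₀, ContDiffAt ℝ 2 f y := hf.eventually (by norm_num)
  have hgev : ∀ᶠ y in nhds y₀, ContDiffAt ℝ 2 g y := hg.eventually (by norm_num)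
  have hstep : (fun y => fderiv ℝ (fun z => f z * g z) y e) =ᶠ[nhds y₀]
      (fun y => f y * fderiv ℝ g y e + g y * fderiv ℝ f y e) := by
    filter_upwards [hfev, hgev] with y hfy hgy
    rw [fderiv_fun_mul (hfy.differentiableAt two_ne_zero) (hgy.differentiableAt two_ne_zero)]
    simp [smul_eq_mul]
  rw [hstep.fderiv_eq]
  -- differentiability facts
  have hDf : DifferentiableAt ℝ (fderiv ℝ f) y₀ :=
    (hf.fderiv_right (le_refl 2 : (1:WithTop ℕ∞) + 1 ≤ 2)).differentiableAt one_ne_zero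
  have hDg : DifferentiableAt ℝ (fderiv ℝ g) y₀ :=
    (hg.fderiv_right (le_refl 2 : (1:WithTop ℕ∞) + 1 ≤ 2)).differentiableAt one_ne_zero
  have hfe : DifferentiableAt ℝ (fun y => fderiv ℝ f y e) y₀ :=
    hDf.clm_apply (differentiableAt_const e)
  have hge : DifferentiableAt ℝ (fun y => fderiv ℝ g y e) y₀ :=
    hDg.clm_apply (differentiableAt_const e)
  have hfd : DifferentiableAt ℝ f y₀ := hf.differentiableAt two_ne_zero
  have hgd : DifferentiableAt ℝ g y₀ := hg.differentiableAt two_ne_zero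
  rw [fderiv_fun_add (f := fun y => f y * fderiv ℝ g y e) (g := fun y => g y * fderiv ℝ f y e)
    (hfd.mul hge) (hgd.mul hfe)]
  rw [ContinuousLinearMap.add_apply]
  rw [fderiv_fun_mul hfd hge, fderiv_fun_mul hgd hfe]
  simp only [ContinuousLinearMap.add_apply, ContinuousLinearMap.smul_apply, smul_eq_mul]
  ring

lemma lapC_mul {f g : ℂ → ℂ} {y₀ : ℂ}
    (hf : ContDiffAt ℝ 2 f y₀) (hg : ContDiffAt ℝ 2 g y₀) :
    lapC (fun y => f y * g y) y₀ =
      lapC f y₀ * g y₀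
        + 2 * (fderiv ℝ f y₀ 1 * fderiv ℝ g y₀ 1
          + fderiv ℝ f y₀ Complex.I * fderiv ℝ g y₀ Complex.I)
        + f y₀ * lapC g y₀ := by
  rw [lapC, fderiv2_mul_dir hf hg 1, fderiv2_mul_dir hf hg Complex.I, lapC, lapC]
  ring

lemma fderiv_comp_holo {f s : ℂ → ℂ} {c₀ : ℂ} {x₀ : ℂ}
    (hs : HasDerivAt s c₀ x₀) (hf : DifferentiableAt ℝ f (s x₀)) (v : ℂ) :
    fderiv ℝ (fun x => f (s x)) x₀ v = fderiv ℝ f (s x₀) (c₀ * v) := by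
  have hsF : HasFDerivAt s
      ((ContinuousLinearMap.smulRight (1 : ℂ →L[ℂ] ℂ) c₀).restrictScalars ℝ) x₀ :=
    hs.hasFDerivAt.restrictScalars ℝ
  have h := (hf.hasFDerivAt.comp x₀ hsF).fderiv
  rw [show (fun x => f (s x)) = f ∘ s from rfl, h]
  simp [smul_eq_mul, mul_comm]

/-- quadratic expansion of a real-bilinear form on `ℂ` along `c` and `c*I`. -/
lemma bilin_expand' (B : ℂ →L[ℝ] ℂ →L[ℝ] ℂ) (p q : ℝ) :
    B (p • (1:ℂ) + q • Complex.I) (p • (1:ℂ) + q • Complex.I)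
      + B ((-q) • (1:ℂ) + p • Complex.I) ((-q) • (1:ℂ) + p • Complex.I)
      = ((p^2 + q^2 : ℝ) : ℂ) * (B 1 1 + B Complex.I Complex.I) := by
  simp only [map_add, map_smul, ContinuousLinearMap.add_apply,
    ContinuousLinearMap.smul_apply]
  simp only [smul_smul, Complex.real_smul]
  push_cast
  ring

lemma bilin_expand (B : ℂ →L[ℝ] ℂ →L[ℝ] ℂ) (c : ℂ) :
    B c c + B (c * Complex.I) (c * Complex.I)
      = ((c.re^2 + c.im^2 : ℝ) : ℂ) * (B 1 1 + B Complex.I Complex.I) := by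
  have hc : c.re • (1:ℂ) + c.im • Complex.I = c := by
    apply Complex.ext <;> simp
  have hcI : (-c.im) • (1:ℂ) + c.re • Complex.I = c * Complex.I := by
    apply Complex.ext <;> simp
  have h := bilin_expand' B c.re c.im
  rw [hc, hcI] at h
  exact h

lemma lapC_comp_holo {f s c : ℂ → ℂ} {x₀ : ℂ}
    (hs : ∀ᶠ x in nhds x₀, HasDerivAt s (c x) x)
    (hc : DifferentiableAt ℂ c x₀)
    (hf : ContDiffAt ℝ 2 f (s x₀)) :
    lapC (fun x => f (s x)) x₀ = ((‖c x₀‖^2 : ℝ) : ℂ) * lapC f (s x₀) := by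
  have hs0 : HasDerivAt s (c x₀) x₀ := hs.self_of_nhds
  have hscont : ContinuousAt s x₀ := (hs0.differentiableAt.restrictScalars ℝ).continuousAt
  have hfev : ∀ᶠ z in nhds (s x₀), ContDiffAt ℝ 2 f z := hf.eventually (by norm_num)
  have hfevs : ∀ᶠ x in nhds x₀, ContDiffAt ℝ 2 f (s x) := hscont.eventually hfev
  have hsdiff : DifferentiableAt ℝ s x₀ := hs0.differentiableAt.restrictScalars ℝ
  -- step: identify the first derivative eventually
  have key : ∀ e : ℂ,
      fderiv ℝ (fun x => fderiv ℝ (fun z => f (s z)) x e) x₀ e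
        = fderiv ℝ (fderiv ℝ f) (s x₀) (c x₀ * e) (c x₀ * e)
          + fderiv ℝ f (s x₀) ((deriv c x₀ * e) * e) := by
    intro e
    have hstep : (fun x => fderiv ℝ (fun z => f (s z)) x e) =ᶠ[nhds x₀]
        (fun x => (fderiv ℝ f (s x)) (c x * e)) := by
      filter_upwards [hs, hfevs] with x hsx hfx
      exact fderiv_comp_holo hsx (hfx.differentiableAt two_ne_zero) e
    rw [hstep.fderiv_eq]
    have hDf : DifferentiableAt ℝ (fderiv ℝ f) (s x₀) :=
      (hf.fderiv_right (le_refl 2 : (1:WithTop ℕ∞) + 1 ≤ 2)).differentiableAt one_ne_zero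
    have hA : DifferentiableAt ℝ (fun x => fderiv ℝ f (s x)) x₀ := hDf.comp x₀ hsdiff
    have hw : DifferentiableAt ℝ (fun x => c x * e) x₀ :=
      (hc.restrictScalars ℝ).mul_const e
    rw [fderiv_clm_apply hA hw]
    have hwder : fderiv ℝ (fun x => c x * e) x₀ e = (deriv c x₀ * e) * e := by
      have hcd : HasDerivAt c (deriv c x₀) x₀ := hc.hasDerivAt
      have := ((hcd.hasFDerivAt.restrictScalars ℝ).mul_const e).fderiv
      rw [this]
      simp [smul_eq_mul]
      ring
    have hAder : fderiv ℝ (fun x => fderiv ℝ f (s x)) x₀ e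
        = fderiv ℝ (fderiv ℝ f) (s x₀) (c x₀ * e) := by
      have hcomp := fderiv_comp (𝕜 := ℝ) x₀ hDf hsdiff
      rw [show (fun x => fderiv ℝ f (s x)) = (fderiv ℝ f) ∘ s from rfl, hcomp]
      have hsder : fderiv ℝ s x₀ e = c x₀ * e := by
        rw [(hs0.hasFDerivAt.restrictScalars ℝ).fderiv]
        simp [smul_eq_mul, mul_comm]
      simp [hsder]
    simp only [ContinuousLinearMap.add_apply, ContinuousLinearMap.comp_apply,
      ContinuousLinearMap.flip_apply]
    rw [hAder, hwder]
    exact add_comm _ _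
  have hDf : DifferentiableAt ℝ (fderiv ℝ f) (s x₀) :=
    (hf.fderiv_right (le_refl 2 : (1:WithTop ℕ∞) + 1 ≤ 2)).differentiableAt one_ne_zero
  rw [lapC, key 1, key Complex.I]
  have hcancel : fderiv ℝ f (s x₀) ((deriv c x₀ * Complex.I) * Complex.I)
      = - fderiv ℝ f (s x₀) ((deriv c x₀ * 1) * 1) := by
    rw [← ContinuousLinearMap.map_neg]
    congr 1
    rw [mul_assoc, Complex.I_mul_I]
    ring
  rw [hcancel]
  have hB := bilin_expand (fderiv ℝ (fderiv ℝ f) (s x₀)) (c x₀)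
  have hnorm : ((c x₀).re^2 + (c x₀).im^2 : ℝ) = ‖c x₀‖^2 := by
    rw [Complex.sq_norm, Complex.normSq_apply]; ring
  rw [lapC_eq_fderiv_fderiv hDf]
  rw [mul_one, ← hnorm]
  rw [← hB]
  ring

lemma contDiffAt_norm' {y : ℂ} (hy : y ≠ 0) : ContDiffAt ℝ 2 (fun z : ℂ => ‖z‖) y := by
  have hq : Complex.normSq y ≠ 0 := by simpa [Complex.normSq_eq_zero] using hy
  have h1 : ContDiffAt ℝ 2 (fun z : ℂ => Complex.normSq z) y := by
    have : ContDiffAt ℝ 2 (fun z : ℂ => z.re * z.re + z.im * z.im) y :=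
      ((Complex.reCLM.contDiff.mul Complex.reCLM.contDiff).add
        (Complex.imCLM.contDiff.mul Complex.imCLM.contDiff)).contDiffAt
    have h2 : (fun z : ℂ => z.re * z.re + z.im * z.im) = fun z : ℂ => Complex.normSq z := by
      funext z; rw [Complex.normSq_apply]
    rwa [h2] at this
  have h := (Real.contDiffAt_sqrt hq).comp y h1
  have h2 : ((fun x : ℝ => Real.sqrt x) ∘ fun z : ℂ => Complex.normSq z)
      = fun z : ℂ => ‖z‖ := by
    funext z; simp [Complex.norm_def, Function.comp]
  rwa [h2] at h

lemma contDiffAt_uu {y : ℂ} (hy : y ≠ 0) : ContDiffAt ℝ 2 uu y := by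
  have hr : ‖y‖ ≠ 0 := norm_ne_zero_iff.mpr hy
  have h1 : ContDiffAt ℝ 2 (fun z : ℂ => ((‖z‖ : ℝ) : ℂ)) y :=
    Complex.ofRealCLM.contDiff.contDiffAt.comp y (contDiffAt_norm' hy)
  have h2 : ContDiffAt ℝ 2 (fun z : ℂ => z * ((‖z‖ : ℝ) : ℂ)⁻¹) y :=
    contDiffAt_id.mul (h1.inv (by exact_mod_cast hr))
  have h3 : (fun z : ℂ => z * ((‖z‖ : ℝ) : ℂ)⁻¹) = uu := by
    funext z; simp [uu, div_eq_mul_inv]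
  rwa [h3] at h2

/-- decomposition of a real-linear map on `ℂ` along the basis `1, I`. -/
lemma clm_decomp (L : ℂ →L[ℝ] ℂ) (z : ℂ) :
    L z = z.re • L 1 + z.im • L Complex.I := by
  have hz : z.re • (1:ℂ) + z.im • Complex.I = z := by
    apply Complex.ext <;> simp
  rw [← hz, map_add, map_smul, map_smul]
  simp

lemma local_sqrt (x₀ : ℂ) (hx : x₀ ≠ 0) :
    ∃ s : ℂ → ℂ, (s x₀)^2 = x₀ ∧ (∀ᶠ x in nhds x₀, s x ^ 2 = x) ∧
      (∀ᶠ x in nhds x₀, HasDerivAt s (s x / (2 * x)) x) ∧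
      ContDiffAt ℂ 2 s x₀ ∧ DifferentiableAt ℂ (fun x => s x / (2 * x)) x₀ := by
  set y₀ := x₀ ^ ((2:ℂ))⁻¹ with hy₀def
  have hy₀sq : y₀^2 = x₀ := by
    rw [pow_two, hy₀def, ← Complex.cpow_add _ _ hx]
    norm_num
  have hUopen : IsOpen {x : ℂ | x / x₀ ∈ Complex.slitPlane} :=
    Complex.isOpen_slitPlane.preimage (continuous_id.div_const x₀)
  have hx₀U : x₀ ∈ {x : ℂ | x / x₀ ∈ Complex.slitPlane} := by
    simp only [Set.mem_setOf_eq, div_self hx]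
    exact Complex.one_mem_slitPlane
  have hU : ∀ᶠ x in nhds x₀, x / x₀ ∈ Complex.slitPlane := hUopen.mem_nhds hx₀U
  have hmem₀ : x₀ / x₀ ∈ Complex.slitPlane := hx₀U
  refine ⟨fun x => y₀ * Complex.exp (Complex.log (x / x₀) / 2), ?_, ?_, ?_, ?_, ?_⟩
  · simp only [div_self hx, Complex.log_one, zero_div, Complex.exp_zero, mul_one]
    exact hy₀sq
  · filter_upwards [hU] with x hmem
    have hx0 : x / x₀ ≠ 0 := Complex.slitPlane_ne_zero hmem
    have hxne : x ≠ 0 := fun h => hx0 (by simp [h])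
    rw [mul_pow, pow_two (Complex.exp _), ← Complex.exp_add]
    rw [show Complex.log (x / x₀) / 2 + Complex.log (x / x₀) / 2 = Complex.log (x / x₀) by ring]
    rw [Complex.exp_log hx0, hy₀sq, mul_div_cancel₀ _ hx]
  · filter_upwards [hU] with x hmem
    have hx0 : x / x₀ ≠ 0 := Complex.slitPlane_ne_zero hmem
    have hxne : x ≠ 0 := fun h => hx0 (by simp [h])
    have h1 : HasDerivAt (fun x : ℂ => x / x₀) (1 / x₀) x := (hasDerivAt_id x).div_const x₀
    have h2 := (Complex.hasDerivAt_log hmem).comp x h1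
    have h3 := h2.div_const 2
    have h4 := (Complex.hasDerivAt_exp _).comp x h3
    have h5 := h4.const_mul y₀
    refine h5.congr_deriv ?_
    simp only [Function.comp_def]
    field_simp
  · have hdiv : ContDiffAt ℂ 2 (fun x : ℂ => x / x₀) x₀ := contDiffAt_id.div_const x₀
    have hlog : ContDiffAt ℂ 2 (fun x : ℂ => Complex.log (x / x₀)) x₀ :=
      ContDiffAt.comp (g := Complex.log) (f := fun x : ℂ => x / x₀) x₀
        (Complex.contDiffAt_log hmem₀) hdiv
    have hexp : ContDiffAt ℂ 2 (fun x : ℂ => Complex.exp (Complex.log (x / x₀) / 2)) x₀ :=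
      ContDiffAt.comp (g := Complex.exp) (f := fun x : ℂ => Complex.log (x / x₀) / 2) x₀
        Complex.contDiff_exp.contDiffAt (hlog.div_const 2)
    exact contDiffAt_const.mul hexp
  · have hdiv : DifferentiableAt ℂ (fun x : ℂ => x / x₀) x₀ := differentiableAt_id.div_const x₀
    have hlog : DifferentiableAt ℂ (fun x : ℂ => Complex.log (x / x₀)) x₀ :=
      DifferentiableAt.comp (g := Complex.log) (f := fun x : ℂ => x / x₀) x₀
        (Complex.differentiableAt_log hmem₀) hdiv
    have hexp : DifferentiableAt ℂ (fun x : ℂ => Complex.exp (Complex.log (x / x₀) / 2)) x₀ :=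
      DifferentiableAt.comp (g := Complex.exp) (f := fun x : ℂ => Complex.log (x / x₀) / 2) x₀
        Complex.differentiable_exp.differentiableAt (hlog.div_const 2)
    have hsd : DifferentiableAt ℂ (fun x => y₀ * Complex.exp (Complex.log (x / x₀) / 2)) x₀ :=
      (differentiableAt_const y₀).mul hexp
    exact hsd.div ((differentiableAt_const 2).mul differentiableAt_id) (by simpa using hx)

/-- Inverse double-covering correspondence: if `ψ` is `C²`, odd, and satisfies
`−Δψ = 4λ‖y‖²ψ` on the punctured unit disk, and `φ` satisfies
`φ(y²) = (y/‖y‖)·ψ(y)` there, then `φ` is `C²` and solves the Aharonov–Bohm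
eigenequation `−Δφ + 2i·Dφ[A₀] + ‖A₀‖²φ = λφ` on the punctured unit disk;
moreover if `ψ` is real valued then `φ` is `K₀`-real. -/
theorem double_covering_to_eigenfunction
    (lam : ℝ) (ψ : ℂ → ℂ)
    (hreg : ContDiffOn ℝ 2 ψ (Metric.ball (0 : ℂ) 1 \ {0}))
    (hodd : ∀ y ∈ Metric.ball (0 : ℂ) 1 \ {0}, ψ (-y) = -ψ y)
    (heq : ∀ y ∈ Metric.ball (0 : ℂ) 1 \ {0},
      -lapC ψ y = 4 * (lam : ℂ) * ((‖y‖ ^ 2 : ℝ) : ℂ) * ψ y)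
    (φ : ℂ → ℂ)
    (hφ : ∀ y ∈ Metric.ball (0 : ℂ) 1 \ {0},
      φ (y ^ 2) = (y / (‖y‖ : ℂ)) * ψ y) :
    ContDiffOn ℝ 2 φ (Metric.ball (0 : ℂ) 1 \ {0}) ∧
    (∀ x ∈ Metric.ball (0 : ℂ) 1 \ {0},
      -lapC φ x + 2 * Complex.I * fderiv ℝ φ x (A0 x)
        + ((‖A0 x‖ ^ 2 : ℝ) : ℂ) * φ x = (lam : ℂ) * φ x) ∧
    ((∀ y ∈ Metric.ball (0 : ℂ) 1 \ {0}, (ψ y).im = 0) →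
      ∀ x ∈ Metric.ball (0 : ℂ) 1 \ {0},
        (x / (‖x‖ : ℂ)) * (starRingEnd ℂ) (φ x) = φ x) := by
  set D := Metric.ball (0 : ℂ) 1 \ {0} with hD_def
  have hD : IsOpen D := Metric.isOpen_ball.sdiff isClosed_singleton
  -- basic facts at a point of D
  have hmemD : ∀ x₀ ∈ D, x₀ ≠ 0 ∧ ‖x₀‖ < 1 := by
    intro x₀ hx₀
    exact ⟨by simpa using hx₀.2, by simpa [mem_ball_zero_iff] using hx₀.1⟩
  -- the local structure at each point
  have main : ∀ x₀ ∈ D, ∃ y₀ : ℂ, y₀ ∈ D ∧ y₀^2 = x₀ ∧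
      ContDiffAt ℝ 2 φ x₀ ∧
      lapC φ x₀ = ((‖y₀ / (2 * x₀)‖^2 : ℝ) : ℂ) * lapC (fun y => uu y * ψ y) y₀ ∧
      fderiv ℝ φ x₀ (A0 x₀) =
        fderiv ℝ (fun y => uu y * ψ y) y₀ ((y₀ / (2 * x₀)) * A0 x₀) := by
    intro x₀ hx₀
    obtain ⟨hx0, hxN⟩ := hmemD x₀ hx₀
    obtain ⟨s, hs_sq0, hs_sq, hs_der, hs_cd, hc_diff⟩ := local_sqrt x₀ hx0
    set y₀ := s x₀ with hy₀_def
    have hy0 : y₀ ≠ 0 := by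
      intro h
      exact hx0 (by rw [← hs_sq0, h]; ring)
    have hyn : ‖y₀‖^2 = ‖x₀‖ := by rw [← norm_pow, hs_sq0]
    have hy_lt : ‖y₀‖ < 1 := by nlinarith [norm_nonneg y₀]
    have hy₀D : y₀ ∈ D := ⟨mem_ball_zero_iff.mpr hy_lt, by simpa using hy0⟩
    have hψcd : ContDiffAt ℝ 2 ψ y₀ := hreg.contDiffAt (hD.mem_nhds hy₀D)
    have hgcd : ContDiffAt ℝ 2 (fun y => uu y * ψ y) y₀ := (contDiffAt_uu hy0).mul hψcd
    have hevφ : φ =ᶠ[nhds x₀] fun x => uu (s x) * ψ (s x) := by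
      filter_upwards [hs_sq, hD.mem_nhds hx₀] with x hsqx hxD
      have hxne : x ≠ 0 := (hmemD x hxD).1
      have hsxne : s x ≠ 0 := by
        intro h
        exact hxne (by rw [← hsqx, h]; ring)
      have hsxD : s x ∈ D := by
        constructor
        · rw [mem_ball_zero_iff]
          have h1 : ‖s x‖^2 = ‖x‖ := by rw [← norm_pow, hsqx]
          nlinarith [norm_nonneg (s x), (hmemD x hxD).2]
        · simpa using hsxne
      calc φ x = φ ((s x)^2) := by rw [hsqx]
        _ = (s x / (‖s x‖ : ℂ)) * ψ (s x) := hφ (s x) hsxD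
        _ = uu (s x) * ψ (s x) := rfl
    refine ⟨y₀, hy₀D, hs_sq0, ?_, ?_, ?_⟩
    · exact (hgcd.comp x₀ (hs_cd.restrict_scalars ℝ)).congr_of_eventuallyEq hevφ
    · rw [lapC_congr hevφ]
      exact lapC_comp_holo hs_der hc_diff hgcd
    · rw [hevφ.fderiv_eq]
      exact fderiv_comp_holo hs_der.self_of_nhds (hgcd.differentiableAt two_ne_zero) _
  refine ⟨?_, ?_, ?_⟩
  · -- Part 1: regularity
    intro x₀ hx₀
    obtain ⟨y₀, _, _, hcd, _, _⟩ := main x₀ hx₀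
    exact hcd.contDiffWithinAt
  · -- Part 2: the eigenequation
    intro x₀ hx₀
    obtain ⟨y₀, hy₀D, hsq, hcd, hlap, hfdval⟩ := main x₀ hx₀
    obtain ⟨hx0, hxN⟩ := hmemD x₀ hx₀
    obtain ⟨hy0, hyN⟩ := hmemD y₀ hy₀D
    set R := ‖y₀‖ with hR_def
    have hR0 : R ≠ 0 := norm_ne_zero_iff.mpr hy0
    have hRc : ((R : ℝ) : ℂ) ≠ 0 := by exact_mod_cast hR0
    have hx₀y : x₀ = y₀^2 := hsq.symm
    have hnx : ‖x₀‖ = R^2 := by rw [hx₀y, norm_pow]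
    have hψcd : ContDiffAt ℝ 2 ψ y₀ := hreg.contDiffAt (hD.mem_nhds hy₀D)
    have hABc : ((y₀.re : ℝ) : ℂ) + ((y₀.im : ℝ) : ℂ) * Complex.I = y₀ := Complex.re_add_im y₀
    have hR2r : (y₀.re)^2 + (y₀.im)^2 = R^2 := by
      rw [hR_def, Complex.sq_norm, Complex.normSq_apply]; ring
    have hR2c : ((y₀.re : ℝ) : ℂ)^2 + ((y₀.im : ℝ) : ℂ)^2 = ((R : ℝ) : ℂ)^2 := by
      exact_mod_cast congrArg (Complex.ofReal) hR2r
    have hI2 : Complex.I^2 = -1 := Complex.I_sq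
    -- the direction vector
    have hcw : (y₀ / (2 * x₀)) * A0 x₀ = ((4*R^4)⁻¹ : ℝ) • (Complex.I * y₀) := by
      rw [A0, hnx, hx₀y, Complex.real_smul]
      push_cast
      have hy2 : (y₀:ℂ)^2 ≠ 0 := pow_ne_zero 2 hy0
      field_simp
      ring
    -- derivative values of uu
    have hfuu : fderiv ℝ uu y₀ = U' y₀ := (hasFDerivAt_uu hy0).fderiv
    have hDu1 : fderiv ℝ uu y₀ 1 = ((R⁻¹ : ℝ) : ℂ) - ((R⁻¹^3 * y₀.re : ℝ) : ℂ) * y₀ := by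
      rw [hfuu, U'_apply, hR_def]; simp
    have hDuI : fderiv ℝ uu y₀ Complex.I
        = ((R⁻¹ : ℝ) : ℂ) * Complex.I - ((R⁻¹^3 * y₀.im : ℝ) : ℂ) * y₀ := by
      rw [hfuu, U'_apply, hR_def]; simp
    have hDuIy : fderiv ℝ uu y₀ (Complex.I * y₀) = ((R⁻¹ : ℝ) : ℂ) * (Complex.I * y₀) := by
      rw [hfuu, U'_apply, hR_def]
      simp only [Complex.mul_re, Complex.mul_im, Complex.I_re, Complex.I_im]
      push_cast
      ring
    -- derivative of ψ in the tangential direction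
    have hDψIy : fderiv ℝ ψ y₀ (Complex.I * y₀)
        = (-((y₀.im : ℝ) : ℂ)) * fderiv ℝ ψ y₀ 1 + ((y₀.re : ℝ) : ℂ) * fderiv ℝ ψ y₀ Complex.I := by
      rw [clm_decomp (fderiv ℝ ψ y₀) (Complex.I * y₀)]
      simp only [Complex.mul_re, Complex.mul_im, Complex.I_re, Complex.I_im, Complex.real_smul]
      push_cast
      ring
    -- product rule values
    have hfg : fderiv ℝ (fun y => uu y * ψ y) y₀
        = uu y₀ • fderiv ℝ ψ y₀ + ψ y₀ • fderiv ℝ uu y₀ :=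
      fderiv_fun_mul ((contDiffAt_uu hy0).differentiableAt two_ne_zero)
        (hψcd.differentiableAt two_ne_zero)
    -- Laplacian of ψ from the eigenvalue equation
    have hLψ : lapC ψ y₀ = -(4 * (lam:ℂ) * ((R^2 : ℝ) : ℂ) * ψ y₀) := by
      have h := heq y₀ hy₀D
      rw [← hR_def] at h
      linear_combination -h
    -- Laplacian of the product
    have hlapg : lapC (fun y => uu y * ψ y) y₀
        = (-uu y₀ / ((R : ℝ) : ℂ)^2) * ψ y₀
          + 2 * (fderiv ℝ uu y₀ 1 * fderiv ℝ ψ y₀ 1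
            + fderiv ℝ uu y₀ Complex.I * fderiv ℝ ψ y₀ Complex.I)
          + uu y₀ * (-(4 * (lam:ℂ) * ((R^2 : ℝ) : ℂ) * ψ y₀)) := by
      rw [lapC_mul (contDiffAt_uu hy0) hψcd, lapC_uu hy0, hLψ]
    -- value of φ at x₀
    have hφx : φ x₀ = uu y₀ * ψ y₀ := by
      have h := hφ y₀ hy₀D
      rw [hsq] at h
      exact h
    -- norms
    have hnormc : (‖y₀ / (2 * x₀)‖^2 : ℝ) = (4*R^2)⁻¹ := by
      rw [hx₀y]
      rw [norm_div, norm_mul, norm_pow]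
      simp only [Complex.norm_ofNat]
      rw [← hR_def]
      field_simp
      ring
    have hA0n : (‖A0 x₀‖^2 : ℝ) = (4*R^4)⁻¹ := by
      rw [A0, norm_div, norm_mul, norm_mul, Complex.norm_I, one_mul]
      simp only [Complex.norm_ofNat, norm_pow, Complex.norm_real, Real.norm_eq_abs,
        abs_norm]
      rw [hnx]
      field_simp
      ring
    -- key tangential identity
    have hcon : y₀ * (((y₀.re:ℝ):ℂ) - ((y₀.im:ℝ):ℂ) * Complex.I) = ((R:ℝ):ℂ)^2 := by
      linear_combination (-(((y₀.re:ℝ):ℂ) - ((y₀.im:ℝ):ℂ)*Complex.I)) * hABc + hR2c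
        + (-((y₀.im:ℝ):ℂ)^2) * hI2
    have hRR : ((R:ℝ):ℂ) * ((R:ℝ):ℂ)⁻¹ = 1 := mul_inv_cancel₀ hRc
    have happ : fderiv ℝ (fun y => uu y * ψ y) y₀ ((y₀ / (2 * x₀)) * A0 x₀)
        = (((4*R^4)⁻¹ : ℝ) : ℂ) * (uu y₀ * ((-((y₀.im : ℝ):ℂ)) * fderiv ℝ ψ y₀ 1
              + ((y₀.re : ℝ):ℂ) * fderiv ℝ ψ y₀ Complex.I)
            + ψ y₀ * (((R⁻¹ : ℝ) : ℂ) * (Complex.I * y₀))) := by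
      rw [hcw, map_smul, hfg]
      simp only [ContinuousLinearMap.add_apply, ContinuousLinearMap.smul_apply, smul_eq_mul]
      rw [hDuIy, hDψIy, Complex.real_smul]
    have KEY : ((R:ℝ):ℂ)^2 * (fderiv ℝ uu y₀ 1 * fderiv ℝ ψ y₀ 1
          + fderiv ℝ uu y₀ Complex.I * fderiv ℝ ψ y₀ Complex.I)
        = Complex.I * (y₀ * ((R:ℝ):ℂ)⁻¹) * ((-((y₀.im : ℝ):ℂ)) * fderiv ℝ ψ y₀ 1
            + ((y₀.re : ℝ):ℂ) * fderiv ℝ ψ y₀ Complex.I) := by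
      rw [hDu1, hDuI]
      push_cast
      linear_combination (-(((R:ℝ):ℂ)⁻¹) * fderiv ℝ ψ y₀ 1
          - ((R:ℝ):ℂ)⁻¹ * Complex.I * fderiv ℝ ψ y₀ Complex.I) * hcon
        + (-(((R:ℝ):ℂ)⁻¹) * y₀ * ((y₀.im:ℝ):ℂ) * fderiv ℝ ψ y₀ Complex.I) * hI2
        + (-(((R:ℝ):ℂ)⁻¹) * (((R:ℝ):ℂ) * ((R:ℝ):ℂ)⁻¹ + 1)
            * (((y₀.re:ℝ):ℂ) * y₀ * fderiv ℝ ψ y₀ 1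
              + ((y₀.im:ℝ):ℂ) * y₀ * fderiv ℝ ψ y₀ Complex.I)) * hRR
    -- assemble
    have huu : uu y₀ = y₀ * ((R:ℝ):ℂ)⁻¹ := by
      rw [uu, ← hR_def, div_eq_mul_inv]
    rw [hlap, hnormc, hφx, hA0n, hfdval, happ, hlapg, huu]
    push_cast
    linear_combination (-(1:ℂ)/(2*((R:ℝ):ℂ)^4)) * KEY
      + ((y₀ * ψ y₀) / (2*((R:ℝ):ℂ)^5)) * hI2
      + ((1/2)*((R:ℝ):ℂ)⁻¹^2*(((R:ℝ):ℂ)*((R:ℝ):ℂ)⁻¹+1)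
          *(fderiv ℝ uu y₀ 1 * fderiv ℝ ψ y₀ 1 + fderiv ℝ uu y₀ Complex.I * fderiv ℝ ψ y₀ Complex.I)
        + ((R:ℝ):ℂ)⁻¹*y₀*(ψ y₀)*(lam:ℂ)*(((R:ℝ):ℂ)*((R:ℝ):ℂ)⁻¹+1)) * hRR
  · -- Part 3: K₀-reality
    intro hreal x₀ hx₀
    obtain ⟨y₀, hy₀D, hsq, _, _, _⟩ := main x₀ hx₀
    obtain ⟨hy0, _⟩ := hmemD y₀ hy₀D
    set R := ‖y₀‖ with hR_def
    have hR0 : R ≠ 0 := norm_ne_zero_iff.mpr hy0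
    have hRc : ((R : ℝ) : ℂ) ≠ 0 := by exact_mod_cast hR0
    have hφx : φ x₀ = y₀ / ((R:ℝ):ℂ) * ψ y₀ := by
      have h := hφ y₀ hy₀D
      rw [hsq] at h
      exact h
    have hψr : (starRingEnd ℂ) (ψ y₀) = ψ y₀ :=
      Complex.conj_eq_iff_im.mpr (hreal y₀ hy₀D)
    have hnx : ‖x₀‖ = R^2 := by rw [← hsq, norm_pow]
    have hmc : y₀ * (starRingEnd ℂ) y₀ = (((R:ℝ):ℂ))^2 := by
      rw [Complex.mul_conj]
      norm_cast
      rw [hR_def, Complex.sq_norm]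
    rw [hφx, hnx, ← hsq]
    rw [map_mul, map_div₀, hψr]
    rw [Complex.conj_ofReal]
    push_cast
    field_simp
    linear_combination ψ y₀ * hmc
end

section
/- Let n ∈ ℕ, λ ∈ ℝ, and c ∈ ℂ. Let u : (0,1) → ℝ be twice continuously differentiable and satisfy ρ²·u''(ρ) + ρ·u'(ρ) + (4λ·ρ⁴ − n²)·u(ρ) = 0 for all ρ ∈ (0,1). Define ψ : B(0,1) \ {0} → ℝ by ψ(y) = u(‖y‖)·Re( c·(y/‖y‖)ⁿ ). Then −Δψ(y) = 4λ·‖y‖²·ψ(y) for all y ∈ B(0,1) \ {0}. -/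
open Complex

/-- The pointwise Euclidean Laplacian on `ℝ² ≅ ℂ` of a real-valued function,
as the sum of the second directional derivatives in the directions `1` and `I`. -/
noncomputable def lapR (f : ℂ → ℝ) (x : ℂ) : ℝ :=
  fderiv ℝ (fun y => fderiv ℝ f y 1) x 1 +
    fderiv ℝ (fun y => fderiv ℝ f y Complex.I) x Complex.I

noncomputable def LH (d : ℂ) : ℂ →L[ℝ] ℝ :=
  reCLM.comp (((ContinuousLinearMap.id ℂ ℂ).smulRight d).restrictScalars ℝ)

@[simp] lemma LH_apply (d v : ℂ) : LH d v = (v * d).re := by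
  simp [LH, smul_eq_mul]

lemma hasFDerivAt_cre (a : ℂ) (m : ℕ) (y : ℂ) :
    HasFDerivAt (fun z : ℂ => (a * z ^ m).re) (LH (a * (m * y ^ (m - 1)))) y := by
  have h1 : HasDerivAt (fun z : ℂ => a * z ^ m) (a * (m * y ^ (m - 1))) y :=
    (hasDerivAt_pow m y).const_mul a
  have h2 : HasFDerivAt (fun z : ℂ => a * z ^ m)
      (((ContinuousLinearMap.id ℂ ℂ).smulRight (a * (m * y ^ (m-1)))).restrictScalars ℝ) y := by
    have := h1.hasFDerivAt
    exact this.restrictScalars ℝ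
  exact (reCLM.hasFDerivAt).comp y h2

noncomputable def LN (y : ℂ) : ℂ →L[ℝ] ℝ := (2 * y.re) • reCLM + (2 * y.im) • imCLM

@[simp] lemma LN_apply (y v : ℂ) : LN y v = 2 * y.re * v.re + 2 * y.im * v.im := by
  simp [LN]

lemma hasFDerivAt_normSq_s5 (y : ℂ) : HasFDerivAt normSq (LN y) y := by
  have hre : HasFDerivAt (fun z : ℂ => z.re) reCLM y := reCLM.hasFDerivAt
  have him : HasFDerivAt (fun z : ℂ => z.im) imCLM y := imCLM.hasFDerivAt
  have h : HasFDerivAt (fun z : ℂ => z.re * z.re + z.im * z.im)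
      ((y.re • reCLM + y.re • reCLM) + (y.im • imCLM + y.im • imCLM)) y :=
    (hre.mul hre).add (him.mul him)
  have hfun : normSq = fun z : ℂ => z.re * z.re + z.im * z.im := funext normSq_apply
  rw [hfun]
  convert h using 1
  ext1 v
  simp [LN]; ring


lemma lapR_eq (W : ℝ → ℝ) (c : ℂ) (n : ℕ) (y₀ : ℂ)
    (hy : normSq y₀ ∈ Set.Ioo (0:ℝ) 1)
    (hW1 : ∀ s ∈ Set.Ioo (0:ℝ) 1, HasDerivAt W (deriv W s) s)
    (hW2 : HasDerivAt (deriv W) (deriv (deriv W) (normSq y₀)) (normSq y₀)) :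
    lapR (fun y => W (normSq y) * (c * y ^ n).re) y₀ =
      (4 * normSq y₀ * deriv (deriv W) (normSq y₀) + (4 * n + 4) * deriv W (normSq y₀))
        * (c * y₀ ^ n).re := by
  set U : Set ℂ := normSq ⁻¹' (Set.Ioo (0:ℝ) 1) with hUdef
  have hU : IsOpen U := isOpen_Ioo.preimage continuous_normSq
  have hy₀U : y₀ ∈ U := hy
  set φ : ℂ → ℝ := fun y => W (normSq y) * (c * y ^ n).re with hφdef
  -- first derivative formula
  have hφd : ∀ y ∈ U, HasFDerivAt φ
      (W (normSq y) • LH (c * (n * y ^ (n-1))) +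
        (c * y ^ n).re • (deriv W (normSq y) • LN y)) y := by
    intro y hyU
    have hWN : HasFDerivAt (fun z => W (normSq z)) (deriv W (normSq y) • LN y) y :=
      (hW1 _ hyU).comp_hasFDerivAt y (hasFDerivAt_normSq_s5 y)
    exact hWN.mul (hasFDerivAt_cre c n y)
  have hg : ∀ v : ℂ, ∀ y ∈ U, fderiv ℝ φ y v =
      deriv W (normSq y) * (2 * y.re * v.re + 2 * y.im * v.im) * (c * y ^ n).re +
        W (normSq y) * ((v * c * n) * y ^ (n-1)).re := by
    intro v y hyU
    rw [(hφd y hyU).fderiv]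
    simp only [ContinuousLinearMap.add_apply, ContinuousLinearMap.smul_apply, LH_apply, LN_apply,
      smul_eq_mul]
    have : (v * (c * (↑n * y ^ (n-1)))) = ((v * c * ↑n) * y ^ (n-1)) := by ring
    rw [this]; ring
  -- second derivative
  have key : ∀ v : ℂ, fderiv ℝ (fun y => fderiv ℝ φ y v) y₀ v =
      (deriv (deriv W) (normSq y₀) * (2 * y₀.re * v.re + 2 * y₀.im * v.im) *
          (2 * y₀.re * v.re + 2 * y₀.im * v.im) +
        deriv W (normSq y₀) * (2 * v.re * v.re + 2 * v.im * v.im)) * (c * y₀ ^ n).re +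
      deriv W (normSq y₀) * (2 * y₀.re * v.re + 2 * y₀.im * v.im) *
        (v * (c * (↑n * y₀ ^ (n-1)))).re +
      (deriv W (normSq y₀) * (2 * y₀.re * v.re + 2 * y₀.im * v.im) *
        ((v * c * ↑n) * y₀ ^ (n-1)).re +
        W (normSq y₀) * (v * ((v * c * ↑n) * (↑(n-1) * y₀ ^ (n-1-1)))).re) := by
    intro v
    have heq : (fun y => fderiv ℝ φ y v) =ᶠ[nhds y₀] (fun y =>
        deriv W (normSq y) * (2 * y.re * v.re + 2 * y.im * v.im) * (c * y ^ n).re +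
          W (normSq y) * ((v * c * n) * y ^ (n-1)).re) := by
      filter_upwards [hU.mem_nhds hy₀U] with y hyU using hg v y hyU
    rw [heq.fderiv_eq]
    -- components
    have hA : HasFDerivAt (fun z => deriv W (normSq z))
        (deriv (deriv W) (normSq y₀) • LN y₀) y₀ :=
      hW2.comp_hasFDerivAt y₀ (hasFDerivAt_normSq_s5 y₀)
    have hB : HasFDerivAt (fun y : ℂ => 2 * y.re * v.re + 2 * y.im * v.im) (LN v) y₀ := by
      have hfun : (fun y : ℂ => 2 * y.re * v.re + 2 * y.im * v.im) = ⇑(LN v) := by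
        funext z; simp [LN_apply]; ring
      rw [hfun]; exact (LN v).hasFDerivAt
    have hH : HasFDerivAt (fun z : ℂ => (c * z ^ n).re) (LH (c * (n * y₀ ^ (n-1)))) y₀ :=
      hasFDerivAt_cre c n y₀
    have hK : HasFDerivAt (fun z : ℂ => ((v * c * ↑n) * z ^ (n-1)).re)
        (LH ((v * c * ↑n) * (↑(n-1) * y₀ ^ (n-1-1)))) y₀ := hasFDerivAt_cre _ _ y₀
    have hWN : HasFDerivAt (fun z => W (normSq z)) (deriv W (normSq y₀) • LN y₀) y₀ :=
      (hW1 _ hy).comp_hasFDerivAt y₀ (hasFDerivAt_normSq_s5 y₀)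
    have htot : HasFDerivAt (fun y : ℂ => deriv W (normSq y) * (2 * y.re * v.re + 2 * y.im * v.im) * (c * y ^ n).re +
        W (normSq y) * ((v * c * ↑n) * y ^ (n-1)).re) _ y₀ := ((hA.mul hB).mul hH).add (hWN.mul hK)
    rw [htot.fderiv]
    simp only [ContinuousLinearMap.add_apply, ContinuousLinearMap.smul_apply, LH_apply, LN_apply,
      smul_eq_mul, Pi.mul_apply]
    ring
  have e1 := key 1
  have eI := key I
  have hsum : lapR φ y₀ =
      fderiv ℝ (fun y => fderiv ℝ φ y 1) y₀ 1 +
        fderiv ℝ (fun y => fderiv ℝ φ y Complex.I) y₀ Complex.I := rfl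
  rw [hsum, e1, eI]
  simp only [Complex.one_re, Complex.one_im, Complex.I_re, Complex.I_im, mul_one, mul_zero,
    zero_mul, one_mul, add_zero, zero_add]
  set w : ℂ := c * (↑n * y₀ ^ (n-1)) with hw
  have r2 : ((c * ↑n) * y₀ ^ (n-1)).re = w.re := by rw [show (c * ↑n) * y₀^(n-1) = w by rw [hw]; ring]
  have r3 : (I * w).re = -w.im := by simp [Complex.mul_re]
  have r4 : ((I * c * ↑n) * y₀ ^ (n-1)).re = -w.im := by
    rw [show (I * c * ↑n) * y₀^(n-1) = I * w by rw [hw]; ring]; exact r3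
  have r6 : (I * ((I * c * ↑n) * (↑(n-1) * y₀ ^ (n-1-1)))).re
      = -(((c * ↑n) * (↑(n-1) * y₀ ^ (n-1-1)))).re := by
    rw [show I * ((I * c * ↑n) * (↑(n-1) * y₀ ^ (n-1-1)))
        = -((c * ↑n) * (↑(n-1) * y₀ ^ (n-1-1))) by
      linear_combination ((c * ↑n) * (↑(n-1) * y₀ ^ (n-1-1))) * Complex.I_mul_I]
    simp
  have hmid : y₀.re * w.re - y₀.im * w.im = (n : ℝ) * (c * y₀ ^ n).re := by
    have h8 : y₀ * w = (n : ℂ) * (c * y₀ ^ n) := by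
      rw [hw]
      cases n with
      | zero => simp
      | succ m => rw [Nat.add_sub_cancel, pow_succ]; push_cast; ring
    calc y₀.re * w.re - y₀.im * w.im = (y₀ * w).re := (Complex.mul_re _ _).symm
      _ = ((n : ℂ) * (c * y₀ ^ n)).re := by rw [h8]
      _ = (n : ℝ) * (c * y₀ ^ n).re := by simp
  rw [normSq_apply] at *
  rw [r2, r3, r4, r6]
  linear_combination (4 * deriv W (y₀.re * y₀.re + y₀.im * y₀.im)) * hmid

lemma lapR_congr {f g : ℂ → ℝ} {x : ℂ} (h : f =ᶠ[nhds x] g) : lapR f x = lapR g x := by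
  have hf := h.fderiv (𝕜 := ℝ)
  have h1 : (fun y => fderiv ℝ f y 1) =ᶠ[nhds x] (fun y => fderiv ℝ g y 1) :=
    hf.mono fun y hy => by simp only [hy]
  have hI : (fun y => fderiv ℝ f y Complex.I) =ᶠ[nhds x] (fun y => fderiv ℝ g y Complex.I) :=
    hf.mono fun y hy => by simp only [hy]
  unfold lapR
  rw [h1.fderiv_eq, hI.fderiv_eq]


/-- Separation of variables: if `u` is `C²` on `(0,1)` and satisfies
`ρ²u'' + ρu' + (4λρ⁴ − n²)u = 0`, then `ψ(y) = u(‖y‖)·Re(c·(y/‖y‖)ⁿ)`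
satisfies `−Δψ = 4λ‖y‖²ψ` on the punctured unit disk. -/
theorem separation_of_variables
    (n : ℕ) (lam : ℝ) (c : ℂ) (u : ℝ → ℝ)
    (hu : ContDiffOn ℝ 2 u (Set.Ioo 0 1))
    (hode : ∀ ρ ∈ Set.Ioo (0 : ℝ) 1,
      ρ ^ 2 * deriv (deriv u) ρ + ρ * deriv u ρ + (4 * lam * ρ ^ 4 - (n : ℝ) ^ 2) * u ρ = 0)
    (ψ : ℂ → ℝ)
    (hψ : ∀ y, ψ y = u ‖y‖ * (c * (y / (‖y‖ : ℂ)) ^ n).re) :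
    ∀ y ∈ Metric.ball (0 : ℂ) 1 \ {0},
      -lapR ψ y = 4 * lam * ‖y‖ ^ 2 * ψ y := by

  set W : ℝ → ℝ := fun s => u (Real.sqrt s) / (Real.sqrt s) ^ n with hWdef
  -- smoothness of W
  have hs2 : ∀ s ∈ Set.Ioo (0:ℝ) 1, Real.sqrt s ∈ Set.Ioo (0:ℝ) 1 := by
    intro s hs
    refine ⟨Real.sqrt_pos.mpr hs.1, ?_⟩
    rw [show (1:ℝ) = Real.sqrt 1 by simp]
    exact Real.sqrt_lt_sqrt hs.1.le hs.2
  have hsqrtC : ContDiffOn ℝ 2 Real.sqrt (Set.Ioo 0 1) := fun s hs =>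
    (Real.contDiffAt_sqrt hs.1.ne').contDiffWithinAt
  have hWc : ContDiffOn ℝ 2 W (Set.Ioo 0 1) := by
    refine ContDiffOn.div (hu.comp hsqrtC (fun s hs => hs2 s hs)) (hsqrtC.pow n)
      (fun s hs => pow_ne_zero _ (Real.sqrt_pos.mpr hs.1).ne')
  have hW1 : ∀ s ∈ Set.Ioo (0:ℝ) 1, HasDerivAt W (deriv W s) s := fun s hs =>
    ((hWc.differentiableOn (by norm_num)).differentiableAt (isOpen_Ioo.mem_nhds hs)).hasDerivAt
  have hWd : ContDiffOn ℝ 1 (deriv W) (Set.Ioo 0 1) :=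
    hWc.deriv_of_isOpen isOpen_Ioo (by norm_num)
  have hW2 : ∀ s ∈ Set.Ioo (0:ℝ) 1, HasDerivAt (deriv W) (deriv (deriv W) s) s := fun s hs =>
    ((hWd.differentiableOn one_ne_zero).differentiableAt (isOpen_Ioo.mem_nhds hs)).hasDerivAt
  -- u in terms of W
  have hueq : ∀ ρ ∈ Set.Ioo (0:ℝ) 1, u ρ = W (ρ^2) * ρ^n := by
    intro ρ hρ
    rw [hWdef]
    simp only
    rw [Real.sqrt_sq hρ.1.le, div_mul_cancel₀]
    exact pow_ne_zero _ hρ.1.ne'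
  -- derivative of r ↦ W(r²)·rⁿ
  have hsq : ∀ ρ ∈ Set.Ioo (0:ℝ) 1, ρ^2 ∈ Set.Ioo (0:ℝ) 1 := fun ρ hρ =>
    ⟨pow_pos hρ.1 2, pow_lt_one₀ hρ.1.le hρ.2 (by norm_num)⟩
  have hr2 : ∀ ρ : ℝ, HasDerivAt (fun r : ℝ => r^2) (2*ρ) ρ := by
    intro ρ
    simpa using hasDerivAt_pow 2 ρ
  have hWρ : ∀ ρ ∈ Set.Ioo (0:ℝ) 1, HasDerivAt (fun r => W (r^2))
      (deriv W (ρ^2) * (2*ρ)) ρ := fun ρ hρ => by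
    exact (hW1 _ (hsq ρ hρ)).comp_of_eq ρ (hr2 ρ) rfl
  have hd1 : ∀ ρ ∈ Set.Ioo (0:ℝ) 1, HasDerivAt (fun r => W (r^2) * r^n)
      (deriv W (ρ^2) * (2*ρ) * ρ^n + W (ρ^2) * ((n:ℝ) * ρ^(n-1))) ρ := fun ρ hρ =>
    (hWρ ρ hρ).mul (hasDerivAt_pow n ρ)
  have hD1 : ∀ ρ ∈ Set.Ioo (0:ℝ) 1, deriv u ρ =
      deriv W (ρ^2) * (2*ρ) * ρ^n + W (ρ^2) * ((n:ℝ) * ρ^(n-1)) := by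
    intro ρ hρ
    have hev : u =ᶠ[nhds ρ] fun r => W (r^2) * r^n := by
      filter_upwards [isOpen_Ioo.mem_nhds hρ] with r hr using hueq r hr
    rw [hev.deriv_eq, (hd1 ρ hρ).deriv]
  have hd2 : ∀ ρ ∈ Set.Ioo (0:ℝ) 1, HasDerivAt
      (fun r => deriv W (r^2) * (2*r) * r^n + W (r^2) * ((n:ℝ) * r^(n-1)))
      ((deriv (deriv W) (ρ^2) * (2*ρ) * (2*ρ) + deriv W (ρ^2) * 2) * ρ^n
          + deriv W (ρ^2) * (2*ρ) * ((n:ℝ) * ρ^(n-1))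
        + (deriv W (ρ^2) * (2*ρ) * ((n:ℝ) * ρ^(n-1))
          + W (ρ^2) * ((n:ℝ) * (((n-1:ℕ):ℝ) * ρ^(n-1-1))))) ρ := by
    intro ρ hρ
    have h1 : HasDerivAt (fun r => deriv W (r^2)) (deriv (deriv W) (ρ^2) * (2*ρ)) ρ := by
      exact (hW2 _ (hsq ρ hρ)).comp_of_eq ρ (hr2 ρ) rfl
    have h2 : HasDerivAt (fun r : ℝ => 2*r) 2 ρ := by
      simpa using (hasDerivAt_id ρ).const_mul (2:ℝ)
    have h4 : HasDerivAt (fun r : ℝ => (n:ℝ) * r^(n-1))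
        ((n:ℝ) * (((n-1:ℕ):ℝ) * ρ^(n-1-1))) ρ := by
      simpa [mul_comm, mul_assoc, mul_left_comm] using (hasDerivAt_pow (n-1) ρ).const_mul (n:ℝ)
    exact ((h1.mul h2).mul (hasDerivAt_pow n ρ)).add ((hWρ ρ hρ).mul h4)
  have hD2 : ∀ ρ ∈ Set.Ioo (0:ℝ) 1, deriv (deriv u) ρ =
      (deriv (deriv W) (ρ^2) * (2*ρ) * (2*ρ) + deriv W (ρ^2) * 2) * ρ^n
          + deriv W (ρ^2) * (2*ρ) * ((n:ℝ) * ρ^(n-1))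
        + (deriv W (ρ^2) * (2*ρ) * ((n:ℝ) * ρ^(n-1))
          + W (ρ^2) * ((n:ℝ) * (((n-1:ℕ):ℝ) * ρ^(n-1-1)))) := by
    intro ρ hρ
    have hev : deriv u =ᶠ[nhds ρ] fun r => deriv W (r^2) * (2*r) * r^n
        + W (r^2) * ((n:ℝ) * r^(n-1)) := by
      filter_upwards [isOpen_Ioo.mem_nhds hρ] with r hr using hD1 r hr
    rw [hev.deriv_eq, (hd2 ρ hρ).deriv]
  -- the ODE satisfied by W
  have hWode : ∀ s ∈ Set.Ioo (0:ℝ) 1,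
      4 * s * deriv (deriv W) s + (4*(n:ℝ)+4) * deriv W s + 4 * lam * s * W s = 0 := by
    intro s hs
    set ρ := Real.sqrt s with hρdef
    have hρ : ρ ∈ Set.Ioo (0:ℝ) 1 := hs2 s hs
    have hsρ : s = ρ^2 := (Real.sq_sqrt hs.1.le).symm
    have c1 : (n:ℝ) * ρ^(n-1) * ρ = (n:ℝ) * ρ^n := by
      cases n with
      | zero => simp
      | succ m => rw [Nat.add_sub_cancel, pow_succ]; ring
    have c2 : (n:ℝ) * (((n-1:ℕ):ℝ) * ρ^(n-1-1)) * ρ^2 = (n:ℝ) * ((n:ℝ)-1) * ρ^n := by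
      match n with
      | 0 => simp
      | 1 => simp
      | (m+2) =>
        have : m + 2 - 1 - 1 = m := rfl
        rw [this, show m + 2 - 1 = m + 1 from rfl]
        push_cast
        rw [show ρ^(m+2) = ρ^m * ρ^2 by ring]
        ring
    have hE := hode ρ hρ
    rw [hD1 ρ hρ, hD2 ρ hρ, hueq ρ hρ] at hE
    have hkey : ρ^n * ρ^2 * (4 * ρ^2 * deriv (deriv W) (ρ^2)
        + (4*(n:ℝ)+4) * deriv W (ρ^2) + 4 * lam * ρ^2 * W (ρ^2)) = 0 := by
      linear_combination hE - (4 * deriv W (ρ^2) * ρ^2 + W (ρ^2)) * c1 - W (ρ^2) * c2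
    have hρ0 : 0 < ρ := hρ.1
    have hne : ρ^n * ρ^2 ≠ 0 := by positivity
    have := (mul_eq_zero.mp hkey).resolve_left hne
    rw [hsρ]
    exact this
  -- main computation
  intro y hy
  obtain ⟨hball, hne⟩ := hy
  have hy0 : y ≠ 0 := hne
  have hylt : ‖y‖ < 1 := by simpa using Metric.mem_ball.mp hball
  have hsmem : normSq y ∈ Set.Ioo (0:ℝ) 1 := by
    constructor
    · exact normSq_pos.mpr hy0
    · rw [normSq_eq_norm_sq]
      exact pow_lt_one₀ (norm_nonneg _) hylt (by norm_num)
  have hψφ : ψ =ᶠ[nhds y] fun z => W (normSq z) * (c * z^n).re := by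
    filter_upwards [isOpen_compl_singleton.mem_nhds hy0] with z hz
    have hz0 : z ≠ 0 := hz
    have hnz : (0:ℝ) < ‖z‖ := norm_pos_iff.mpr hz0
    rw [hψ z, hWdef]
    simp only
    rw [show Real.sqrt (normSq z) = ‖z‖ by rw [normSq_eq_norm_sq, Real.sqrt_sq (norm_nonneg _)]]
    rw [show (c * (z / (‖z‖ : ℂ))^n).re = (c * z^n).re / ‖z‖^n by
      rw [div_pow, ← mul_div_assoc, ← ofReal_pow, div_ofReal_re]]
    field_simp
  have hlap : lapR ψ y = lapR (fun z => W (normSq z) * (c * z^n).re) y := lapR_congr hψφ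
  rw [hlap, lapR_eq W c n y hsmem hW1 (hW2 _ hsmem)]
  have hode' := hWode (normSq y) hsmem
  have hψy : ψ y = W (normSq y) * (c * y^n).re := hψφ.self_of_nhds
  have hns : normSq y = ‖y‖^2 := by rw [normSq_eq_norm_sq]
  rw [hψy, ← hns]
  linear_combination (-(c * y^n).re) * hode'
end

section
/- Let U ⊆ ℂ \ {0} be open and invariant under complex conjugation, and let u : ℂ → ℂ be twice continuously differentiable on U. Define the pointwise Aharonov–Bohm operator L u = −Δu + 2i·Du[A₀] + ‖A₀‖²·u and the antilinear operator (Σu)(x) = conj(u(conj(x))). Then Σu is twice continuously differentiable on U and L(Σu)(x) = conj((L u)(conj(x))) = (Σ(L u))(x) for every x ∈ U; i.e., L and Σ commute on U. -/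
open Complex

/-- The pointwise Aharonov–Bohm operator `L u = −Δu + 2i·Du[A₀] + ‖A₀‖²·u`. -/
noncomputable def abOp0 (u : ℂ → ℂ) (x : ℂ) : ℂ :=
  -lapC u x + 2 * Complex.I * fderiv ℝ u x (A0 x) + ((‖A0 x‖ ^ 2 : ℝ) : ℂ) * u x

/-- The antilinear reflection operator `(Σu)(x) = conj(u(conj x))`. -/
noncomputable def SigmaOp (u : ℂ → ℂ) (x : ℂ) : ℂ :=
  (starRingEnd ℂ) (u ((starRingEnd ℂ) x))


noncomputable def conjL : ℂ →L[ℝ] ℂ := Complex.conjCLE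

lemma sigma_hasFDerivAt {u : ℂ → ℂ} {x : ℂ} {f : ℂ →L[ℝ] ℂ}
    (h : HasFDerivAt u f ((starRingEnd ℂ) x)) :
    HasFDerivAt (SigmaOp u) ((conjL.comp f).comp conjL) x := by
  have h1 : HasFDerivAt (fun y : ℂ => u ((starRingEnd ℂ) y)) (f.comp conjL) x :=
    h.comp x conjL.hasFDerivAt
  have h2 := (conjL.hasFDerivAt (x := u ((starRingEnd ℂ) x))).comp x h1
  exact h2

lemma sigma_fderiv_apply (u : ℂ → ℂ) (x : ℂ)
    (hx : DifferentiableAt ℝ u ((starRingEnd ℂ) x)) (v : ℂ) :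
    fderiv ℝ (SigmaOp u) x v
      = (starRingEnd ℂ) (fderiv ℝ u ((starRingEnd ℂ) x) ((starRingEnd ℂ) v)) := by
  rw [(sigma_hasFDerivAt hx.hasFDerivAt).fderiv]; rfl

lemma conj_A0 (x : ℂ) : (starRingEnd ℂ) (A0 x) = -A0 ((starRingEnd ℂ) x) := by
  simp [A0, map_div₀, map_ofNat]
  ring

lemma norm_A0_conj (x : ℂ) : ‖A0 ((starRingEnd ℂ) x)‖ = ‖A0 x‖ := by
  have := conj_A0 x
  rw [show A0 ((starRingEnd ℂ) x) = -(starRingEnd ℂ) (A0 x) by rw [this]; ring]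
  simp

/-- The Aharonov–Bohm operator `L` commutes with the reflection `Σ`: if `U ⊆ ℂ \ {0}`
is open and conjugation-invariant and `u` is `C²` on `U`, then `Σu` is `C²` on `U` and
`L(Σu)(x) = conj((L u)(conj x)) = (Σ(L u))(x)` on `U`. -/
theorem abOp_commutes_with_Sigma
    (U : Set ℂ) (hU : IsOpen U) (hU0 : (0 : ℂ) ∉ U)
    (hUconj : ∀ x ∈ U, (starRingEnd ℂ) x ∈ U)
    (u : ℂ → ℂ) (hu : ContDiffOn ℝ 2 u U) :
    ContDiffOn ℝ 2 (SigmaOp u) U ∧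
    ∀ x ∈ U, abOp0 (SigmaOp u) x = (starRingEnd ℂ) (abOp0 u ((starRingEnd ℂ) x)) ∧
      abOp0 (SigmaOp u) x = SigmaOp (abOp0 u) x := by
  have hSig : ContDiffOn ℝ 2 (SigmaOp u) U := by
    have h1 : ContDiffOn ℝ 2 (fun y => u ((starRingEnd ℂ) y)) U :=
      hu.comp (Complex.conjCLE.contDiff.contDiffOn) (fun x hx => hUconj x hx)
    exact Complex.conjCLE.contDiff.comp_contDiffOn h1
  refine ⟨hSig, fun x hx => ?_⟩
  have hud : ∀ z ∈ U, DifferentiableAt ℝ u z := fun z hz =>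
    (hu.differentiableOn (by norm_num)).differentiableAt (hU.mem_nhds hz)
  have hfd : ContDiffOn ℝ 1 (fderiv ℝ u) U := hu.fderiv_of_isOpen hU (by norm_num)
  have hgd : ∀ v : ℂ, ∀ z ∈ U, DifferentiableAt ℝ (fun y => fderiv ℝ u y v) z := by
    intro v z hz
    have hd := (hfd.differentiableOn one_ne_zero).differentiableAt (hU.mem_nhds hz)
    exact ((ContinuousLinearMap.apply ℝ ℂ v).differentiableAt).comp z hd
  have key2 : ∀ v w : ℂ, fderiv ℝ (fun y => fderiv ℝ (SigmaOp u) y v) x w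
      = (starRingEnd ℂ) (fderiv ℝ (fun z => fderiv ℝ u z ((starRingEnd ℂ) v))
          ((starRingEnd ℂ) x) ((starRingEnd ℂ) w)) := by
    intro v w
    have hev : (fun y => fderiv ℝ (SigmaOp u) y v)
        =ᶠ[nhds x] SigmaOp (fun z => fderiv ℝ u z ((starRingEnd ℂ) v)) := by
      filter_upwards [hU.mem_nhds hx] with y hy
      exact sigma_fderiv_apply u y (hud _ (hUconj y hy)) v
    rw [hev.fderiv_eq]
    exact sigma_fderiv_apply _ x (hgd _ _ (hUconj x hx)) w
  have hlap : lapC (SigmaOp u) x = (starRingEnd ℂ) (lapC u ((starRingEnd ℂ) x)) := by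
    rw [lapC, lapC, key2 1 1, key2 I I, map_add]
    congr 1
    · norm_num
    · rw [show ((starRingEnd ℂ) I) = -I by simp]
      have hne : (fun z => fderiv ℝ u z (-I : ℂ)) = fun z => -(fderiv ℝ u z I) := by
        funext z; exact (fderiv ℝ u z).map_neg I
      rw [hne, fderiv_fun_neg]
      simp
  have hm : fderiv ℝ (SigmaOp u) x (A0 x)
      = -(starRingEnd ℂ) (fderiv ℝ u ((starRingEnd ℂ) x) (A0 ((starRingEnd ℂ) x))) := by
    rw [sigma_fderiv_apply u x (hud _ (hUconj x hx)), conj_A0,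
      (fderiv ℝ u ((starRingEnd ℂ) x)).map_neg, map_neg]
  have h1 : abOp0 (SigmaOp u) x = (starRingEnd ℂ) (abOp0 u ((starRingEnd ℂ) x)) := by
    rw [abOp0, abOp0, hlap, hm, norm_A0_conj]
    simp only [map_add, map_neg, map_mul, Complex.conj_I, Complex.conj_ofReal, map_ofNat,
      SigmaOp]
    ring
  exact ⟨h1, h1⟩
end

section
/- Let λ ∈ ℝ and let u : ℂ → ℂ be twice continuously differentiable on B(0,1) \ {0} and solve −Δu(x) + 2i·Du(x)[A₀(x)] + ‖A₀(x)‖²·u(x) = λ·u(x) there. Define v on the open upper half-disk D⁺ = {x ∈ B(0,1) : Im(x) > 0} by v(x) = exp(−(i/2)·arg(x))·u(x), where arg is the principal argument (so arg(x) ∈ (0,π) on D⁺). Then v is twice continuously differentiable on D⁺ and satisfies −Δv(x) = λ·v(x) for all x ∈ D⁺. If moreover u satisfies the K₀-reality condition (x/‖x‖)·conj(u(x)) = u(x) on B(0,1) \ {0}, then v is real-valued on D⁺. -/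
open Complex

/-- The gauge factor `e^{-(i/2)·arg y}`, written via `(log y).im = arg y`. -/
noncomputable def phiAB (y : ℂ) : ℂ :=
  Complex.exp (-(Complex.I / 2) * (((Complex.log y).im : ℝ) : ℂ))

lemma hasFDerivAt_phiAB {y : ℂ} (hy : 0 < y.im) :
    ∃ T : ℂ →L[ℝ] ℂ, HasFDerivAt phiAB T y ∧
      ∀ h : ℂ, T h = phiAB y * -(Complex.I / 2) * (((h * y⁻¹).im : ℝ) : ℂ) := by
  have hslit : y ∈ Complex.slitPlane := Complex.mem_slitPlane_iff.2 (Or.inr (ne_of_gt hy))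
  have hlog : HasFDerivAt Complex.log
      (((1 : ℂ →L[ℂ] ℂ).smulRight y⁻¹).restrictScalars ℝ) y :=
    (Complex.hasDerivAt_log hslit).hasFDerivAt.restrictScalars ℝ
  have h1 : HasFDerivAt (fun z => (((Complex.log z).im : ℝ) : ℂ))
      (Complex.ofRealCLM.comp (Complex.imCLM.comp
        (((1 : ℂ →L[ℂ] ℂ).smulRight y⁻¹).restrictScalars ℝ))) y :=
    Complex.ofRealCLM.hasFDerivAt.comp y (Complex.imCLM.hasFDerivAt.comp y hlog)
  have h2 := (h1.const_mul (-(Complex.I / 2))).cexp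
  refine ⟨_, h2, fun h => ?_⟩
  simp [phiAB, smul_eq_mul]
  ring

lemma hasFDerivAt_cfun (e : ℂ) {y : ℂ} (hy : y ≠ 0) :
    ∃ T : ℂ →L[ℝ] ℂ, HasFDerivAt (fun z : ℂ => (((e * z⁻¹).im : ℝ) : ℂ)) T y ∧
      ∀ h : ℂ, T h = (((e * (h * -(y ^ 2)⁻¹)).im : ℝ) : ℂ) := by
  have hinv : HasFDerivAt (fun z : ℂ => z⁻¹)
      (((1 : ℂ →L[ℂ] ℂ).smulRight (-(y ^ 2)⁻¹)).restrictScalars ℝ) y :=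
    (hasDerivAt_inv hy).hasFDerivAt.restrictScalars ℝ
  have h1 := hinv.const_mul e
  have h2 : HasFDerivAt (fun z : ℂ => (((e * z⁻¹).im : ℝ) : ℂ))
      (Complex.ofRealCLM.comp (Complex.imCLM.comp
        (e • (((1 : ℂ →L[ℂ] ℂ).smulRight (-(y ^ 2)⁻¹)).restrictScalars ℝ)))) y :=
    Complex.ofRealCLM.hasFDerivAt.comp y (Complex.imCLM.hasFDerivAt.comp y h1)
  exact ⟨_, h2, fun h => by simp [smul_eq_mul, mul_assoc]⟩

/-- Gauge transformation to the upper half-disk: if `u` is a `C²` solution of the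
Aharonov–Bohm eigenequation `−Δu + 2i·Du[A₀] + ‖A₀‖²u = λu` on the punctured unit
disk, then `v(x) = e^{−(i/2)·arg x}·u(x)` is `C²` on the open upper half-disk `D⁺`
and satisfies `−Δv = λv` there; if moreover `u` is `K₀`-real then `v` is real
valued on `D⁺`. -/
theorem gauge_transform_to_half_disk
    (lam : ℝ) (u : ℂ → ℂ)
    (hreg : ContDiffOn ℝ 2 u (Metric.ball (0 : ℂ) 1 \ {0}))
    (heq : ∀ x ∈ Metric.ball (0 : ℂ) 1 \ {0},
      -lapC u x + 2 * Complex.I * fderiv ℝ u x (A0 x)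
        + ((‖A0 x‖ ^ 2 : ℝ) : ℂ) * u x = (lam : ℂ) * u x)
    (v : ℂ → ℂ)
    (hv : ∀ x, v x = Complex.exp (-(Complex.I / 2) * (Complex.arg x : ℂ)) * u x) :
    ContDiffOn ℝ 2 v {x ∈ Metric.ball (0 : ℂ) 1 | 0 < x.im} ∧
    (∀ x ∈ {x ∈ Metric.ball (0 : ℂ) 1 | 0 < x.im}, -lapC v x = (lam : ℂ) * v x) ∧
    ((∀ x ∈ Metric.ball (0 : ℂ) 1 \ {0},
        (x / (‖x‖ : ℂ)) * (starRingEnd ℂ) (u x) = u x) →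
      ∀ x ∈ {x ∈ Metric.ball (0 : ℂ) 1 | 0 < x.im}, (v x).im = 0) := by
  have hvφ : v = fun y => phiAB y * u y := by
    funext y; rw [hv y, phiAB, Complex.log_im]
  have hsub : {x ∈ Metric.ball (0 : ℂ) 1 | 0 < x.im} ⊆ Metric.ball (0 : ℂ) 1 \ {0} := by
    rintro x ⟨hx1, hx2⟩
    exact ⟨hx1, fun h => by simp [Set.mem_singleton_iff.1 h] at hx2⟩
  have hOo : IsOpen (Metric.ball (0 : ℂ) 1 \ {0}) := Metric.isOpen_ball.sdiff isClosed_singleton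
  have hudiff : ∀ y ∈ Metric.ball (0 : ℂ) 1 \ {0}, HasFDerivAt u (fderiv ℝ u y) y := fun y hy =>
    ((hreg.contDiffAt (hOo.mem_nhds hy)).differentiableAt (by norm_num)).hasFDerivAt
  refine ⟨?_, ?_, ?_⟩
  · -- regularity of v
    have hphi : ∀ y : ℂ, 0 < y.im → ContDiffAt ℝ 2 phiAB y := by
      intro y hy
      have hslit : y ∈ Complex.slitPlane := Complex.mem_slitPlane_iff.2 (Or.inr (ne_of_gt hy))
      have hlog : ContDiffAt ℝ 2 Complex.log y :=
        ((analyticAt_clog hslit).contDiffAt).restrict_scalars ℝ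
      have h1 : ContDiffAt ℝ 2 (fun z => -(Complex.I / 2) * (((Complex.log z).im : ℝ) : ℂ)) y :=
        contDiffAt_const.mul
          (Complex.ofRealCLM.contDiff.contDiffAt.comp y
            (Complex.imCLM.contDiff.contDiffAt.comp y hlog))
      exact Complex.contDiff_exp.contDiffAt.comp y h1
    rw [hvφ]
    intro x hx
    exact ((hphi x hx.2).contDiffWithinAt.mono hsub).mul ((hreg.mono hsub) x hx)
  · -- the eigenvalue equation for v
    intro x hx
    obtain ⟨hx1, hx2⟩ := hx
    have hx0 : x ≠ 0 := fun h => by simp [h] at hx2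
    set U : Set ℂ := Metric.ball (0 : ℂ) 1 ∩ {y : ℂ | 0 < y.im} with hU
    have hUo : IsOpen U :=
      Metric.isOpen_ball.inter (isOpen_lt continuous_const Complex.continuous_im)
    have hxU : x ∈ U := ⟨hx1, hx2⟩
    have hUsub : U ⊆ Metric.ball (0 : ℂ) 1 \ {0} := hsub
    have hxBS : x ∈ Metric.ball (0 : ℂ) 1 \ {0} := hUsub hxU
    have step1 : ∀ e : ℂ, ∀ y ∈ U, fderiv ℝ v y e
        = phiAB y * fderiv ℝ u y e
          + u y * (phiAB y * -(Complex.I / 2) * (((e * y⁻¹).im : ℝ) : ℂ)) := by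
      intro e y hy
      obtain ⟨T, hT, hTval⟩ := hasFDerivAt_phiAB hy.2
      have hu' := hudiff y (hUsub hy)
      have hv' : HasFDerivAt v (phiAB y • fderiv ℝ u y + u y • T) y := by
        rw [hvφ]; exact hT.mul hu'
      rw [hv'.fderiv]
      simp [hTval, smul_eq_mul]
    have hcd2 : ContDiffAt ℝ 2 u x := hreg.contDiffAt (hOo.mem_nhds hxBS)
    have hDu : HasFDerivAt (fderiv ℝ u) (fderiv ℝ (fderiv ℝ u) x) x :=
      ((hcd2.fderiv_right (m := 1) (by norm_num)).differentiableAt (by norm_num)).hasFDerivAt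
    have hDue : ∀ e : ℂ, HasFDerivAt (fun y => fderiv ℝ u y e)
        ((fderiv ℝ u x).comp (0 : ℂ →L[ℝ] ℂ) + (fderiv ℝ (fderiv ℝ u) x).flip e) x :=
      fun e => hDu.clm_apply (hasFDerivAt_const e x)
    have hlapu : lapC u x = (fderiv ℝ (fderiv ℝ u) x 1) 1
        + (fderiv ℝ (fderiv ℝ u) x Complex.I) Complex.I := by
      simp only [lapC, (hDue 1).fderiv, (hDue Complex.I).fderiv]
      simp
    have main : ∀ e : ℂ, fderiv ℝ (fun y => fderiv ℝ v y e) x e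
        = phiAB x * (fderiv ℝ (fderiv ℝ u) x e) e
          + 2 * (phiAB x * -(Complex.I / 2) * (((e * x⁻¹).im : ℝ) : ℂ)) * fderiv ℝ u x e
          + u x * ((phiAB x * -(Complex.I / 2) * (((e * x⁻¹).im : ℝ) : ℂ)) * -(Complex.I / 2)
                * (((e * x⁻¹).im : ℝ) : ℂ)
              + phiAB x * -(Complex.I / 2) * (((e * (e * -(x ^ 2)⁻¹)).im : ℝ) : ℂ)) := by
      intro e
      obtain ⟨T, hT, hTval⟩ := hasFDerivAt_phiAB hx2
      obtain ⟨N, hN, hNval⟩ := hasFDerivAt_cfun e hx0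
      have hu' := hudiff x hxBS
      have hG := (hT.mul (hDue e)).add
        (hu'.mul ((hT.mul_const (-(Complex.I / 2))).mul hN))
      have hEE : (fun y => fderiv ℝ v y e) =ᶠ[nhds x]
          (fun y => phiAB y * fderiv ℝ u y e
            + u y * (phiAB y * -(Complex.I / 2) * (((e * y⁻¹).im : ℝ) : ℂ))) :=
        Filter.eventuallyEq_of_mem (hUo.mem_nhds hxU) (step1 e)
      rw [hEE.fderiv_eq, (show HasFDerivAt (fun y => phiAB y * fderiv ℝ u y e
            + u y * (phiAB y * -(Complex.I / 2) * (((e * y⁻¹).im : ℝ) : ℂ))) _ x from hG).fderiv]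
      simp [hTval, hNval, smul_eq_mul]
      ring
    have hfd1 := main 1
    have hfdI := main Complex.I
    have e1 : ((1 : ℂ) * x⁻¹).im = (x⁻¹).im := by simp
    have e2 : (Complex.I * x⁻¹).im = (x⁻¹).re := by simp
    have e3 : ((1 : ℂ) * ((1 : ℂ) * -(x ^ 2)⁻¹)).im = -((x ^ 2)⁻¹).im := by simp
    have e4 : (Complex.I * (Complex.I * -(x ^ 2)⁻¹)).im = ((x ^ 2)⁻¹).im := by
      rw [← mul_assoc, Complex.I_mul_I]; simp
    rw [e1, e3] at hfd1
    rw [e2, e4] at hfdI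
    have hnq0 : Complex.normSq x ≠ 0 := (Complex.normSq_pos.2 hx0).ne'
    have hA0 : A0 x = Complex.I * x / (2 * ((Complex.normSq x : ℝ) : ℂ)) := by
      rw [A0, ← Complex.ofReal_pow, Complex.sq_norm]
    have hA0re : (A0 x).re = (x⁻¹).im / 2 := by
      rw [hA0, Complex.inv_im]
      rw [show (2 * ((Complex.normSq x : ℝ) : ℂ)) = (((2 * Complex.normSq x : ℝ)) : ℂ) by
        push_cast; ring]
      rw [Complex.div_ofReal_re]
      simp [Complex.mul_re]
      field_simp
    have hA0im : (A0 x).im = (x⁻¹).re / 2 := by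
      rw [hA0, Complex.inv_re]
      rw [show (2 * ((Complex.normSq x : ℝ) : ℂ)) = (((2 * Complex.normSq x : ℝ)) : ℂ) by
        push_cast; ring]
      rw [Complex.div_ofReal_im]
      simp [Complex.mul_im]
      field_simp
      try exact Or.inl (by ring)
    have hA0split : A0 x = ((x⁻¹).im / 2 : ℝ) • (1 : ℂ) + ((x⁻¹).re / 2 : ℝ) • Complex.I := by
      apply Complex.ext <;>
        simp [hA0re, hA0im, Complex.smul_re, Complex.smul_im]
    have hDuA0 : (fderiv ℝ u x) (A0 x)
        = ((((x⁻¹).im / 2 : ℝ)) : ℂ) * (fderiv ℝ u x) 1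
          + ((((x⁻¹).re / 2 : ℝ)) : ℂ) * (fderiv ℝ u x) Complex.I := by
      rw [hA0split, map_add, map_smul, map_smul, Complex.real_smul, Complex.real_smul]
    have hnA0 : (‖A0 x‖ ^ 2 : ℝ) = ((x⁻¹).im ^ 2 + (x⁻¹).re ^ 2) / 4 := by
      rw [Complex.sq_norm, Complex.normSq_apply, hA0re, hA0im]; ring
    have heqx := heq x hxBS
    rw [hlapu, hDuA0, hnA0] at heqx
    push_cast at heqx
    have hvx : v x = phiAB x * u x := by rw [hvφ]
    rw [hvx]
    simp only [lapC]
    rw [hfd1, hfdI]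
    push_cast
    linear_combination phiAB x * heqx
      + (-(u x) * phiAB x * (((x⁻¹).im : ℂ) ^ 2 + ((x⁻¹).re : ℂ) ^ 2) / 4) * Complex.I_sq
  · -- reality of v
    intro hK x hx
    obtain ⟨hx1, hx2⟩ := hx
    have hx0 : x ≠ 0 := fun h => by simp [h] at hx2
    have hnorm : (‖x‖ : ℂ) ≠ 0 := by
      simpa using fun h => hx0 (norm_eq_zero.1 h)
    rw [← Complex.conj_eq_iff_im]
    have hKx := hK x ⟨hx1, fun h => hx0 (Set.mem_singleton_iff.1 h)⟩
    have hne : (x / (‖x‖ : ℂ)) ≠ 0 := div_ne_zero hx0 hnorm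
    have hcu : (starRingEnd ℂ) (u x) = (‖x‖ : ℂ) / x * u x := by
      have h1 : (‖x‖ : ℂ) / x * (x / (‖x‖ : ℂ)) = 1 := by
        field_simp
      calc (starRingEnd ℂ) (u x)
          = (‖x‖ : ℂ) / x * (x / (‖x‖ : ℂ)) * (starRingEnd ℂ) (u x) := by
            rw [h1, one_mul]
        _ = (‖x‖ : ℂ) / x * u x := by rw [mul_assoc, hKx]
    have hxeq : ((‖x‖ : ℝ) : ℂ) * Complex.exp (Complex.arg x * Complex.I) = x :=
      Complex.norm_mul_exp_arg_mul_I x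
    have habs : (‖x‖ : ℂ) = ((‖x‖ : ℝ) : ℂ) := rfl
    rw [hv x, map_mul, hcu, ← Complex.exp_conj]
    have hconj : (starRingEnd ℂ) (-(Complex.I / 2) * (Complex.arg x : ℂ))
        = (Complex.I / 2) * (Complex.arg x : ℂ) := by
      simp [map_mul, map_div₀, Complex.conj_I, map_ofNat]
      ring
    rw [hconj]
    have hdiv : (‖x‖ : ℂ) / x = Complex.exp (-(Complex.arg x * Complex.I)) := by
      rw [Complex.exp_neg]
      nth_rewrite 2 [← hxeq]
      rw [div_mul_eq_div_div, div_self hnorm, one_div]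
    rw [hdiv, ← mul_assoc, ← Complex.exp_add]
    ring_nf
end

section
/- For every integer k ≥ 1, there exists exactly one x ∈ (kπ, (k+1)π) such that sin(x) − x·cos(x) = 0; moreover sin(x) − x·cos(x) ≠ 0 for all x ∈ (0, π]. -/
open Real Set

private lemma deriv_aux (x : ℝ) :
    HasDerivAt (fun y : ℝ => (-1 : ℝ) ^ (k : ℕ) * (Real.sin y - y * Real.cos y))
      ((-1 : ℝ) ^ (k : ℕ) * (x * Real.sin x)) x := by
  have h : HasDerivAt (fun y : ℝ => Real.sin y - y * Real.cos y) (x * Real.sin x) x := by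
    have h1 : HasDerivAt (fun y : ℝ => y * Real.cos y) (1 * Real.cos x + x * (-Real.sin x)) x :=
      (hasDerivAt_id x).mul (Real.hasDerivAt_cos x)
    have := (Real.hasDerivAt_sin x).sub h1
    exact this.congr_deriv (by ring)
  exact h.const_mul _

private lemma sin_sign (k : ℕ) {x : ℝ} (hx : x ∈ Set.Ioo ((k : ℝ) * Real.pi) (((k : ℝ) + 1) * Real.pi)) :
    0 < (-1 : ℝ) ^ k * Real.sin x := by
  obtain ⟨h1, h2⟩ := hx
  have h := Real.sin_add_int_mul_pi (x - (k : ℝ) * Real.pi) (k : ℤ)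
  push_cast at h
  rw [zpow_natCast] at h
  rw [sub_add_cancel] at h
  rw [h]
  have hpos : 0 < Real.sin (x - k * Real.pi) :=
    Real.sin_pos_of_pos_of_lt_pi (by linarith) (by nlinarith)
  have h1 : (-1 : ℝ) ^ k * (-1 : ℝ) ^ k = 1 := by
    rw [← pow_add]; exact Even.neg_one_pow ⟨k, rfl⟩
  nlinarith

private lemma cos_kpi (k : ℕ) : Real.cos ((k : ℝ) * Real.pi) = (-1 : ℝ) ^ k := by
  have := Real.cos_nat_mul_pi_sub 0 k
  simpa using this

/-- Interlacing of the zeros of `J_{1/2}` and `J_{3/2}`: for every integer `k ≥ 1`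
there is exactly one `x ∈ (kπ, (k+1)π)` with `sin x − x·cos x = 0`, and
`sin x − x·cos x ≠ 0` for all `x ∈ (0, π]`. -/
theorem bessel_zero_interlacing :
    (∀ k : ℕ, 1 ≤ k → ∃! x : ℝ,
      x ∈ Set.Ioo ((k : ℝ) * Real.pi) (((k : ℝ) + 1) * Real.pi) ∧
        Real.sin x - x * Real.cos x = 0) ∧
    (∀ x ∈ Set.Ioc (0 : ℝ) Real.pi, Real.sin x - x * Real.cos x ≠ 0) := by
  have pi_pos := Real.pi_pos
  constructor
  · intro k hk
    set a : ℝ := (k : ℝ) * Real.pi with ha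
    set b : ℝ := ((k : ℝ) + 1) * Real.pi with hb
    have hab : a < b := by
      have : (k : ℝ) < (k : ℝ) + 1 := by linarith
      exact mul_lt_mul_of_pos_right this pi_pos
    set g : ℝ → ℝ := fun y => (-1 : ℝ) ^ k * (Real.sin y - y * Real.cos y) with hg
    have hmono : StrictMonoOn g (Set.Icc a b) := by
      apply strictMonoOn_of_deriv_pos (convex_Icc a b)
      · exact (continuous_const.mul ((Real.continuous_sin.sub (continuous_id.mul Real.continuous_cos)))).continuousOn
      · intro x hx
        rw [interior_Icc] at hx
        rw [(deriv_aux (k := k) x).deriv]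
        have hxpos : 0 < x := lt_trans (by positivity) hx.1
        have := sin_sign k hx
        nlinarith
    have hga : g a = -(k * Real.pi) := by
      have : Real.sin a = 0 := by rw [ha]; exact Real.sin_nat_mul_pi k
      have hc : Real.cos a = (-1 : ℝ) ^ k := cos_kpi k
      simp only [hg, ha] at this hc ⊢; simp only [this, hc]
      have h1 : (-1 : ℝ) ^ k * (-1 : ℝ) ^ k = 1 := by
        rw [← pow_add]; exact Even.neg_one_pow ⟨k, rfl⟩
      linear_combination (-((k : ℝ) * Real.pi)) * h1
    have hgb : g b = (k + 1) * Real.pi := by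
      have hs : Real.sin b = 0 := by
        have := Real.sin_nat_mul_pi (k + 1)
        simp only [hb]; push_cast at this ⊢; linarith [this]
      have hc : Real.cos b = (-1 : ℝ) ^ (k + 1) := by
        have := cos_kpi (k + 1)
        simp only [hb]; push_cast at this ⊢; linarith [this]
      simp only [hg, hb] at hs hc ⊢; simp only [hs, hc]
      have h1 : (-1 : ℝ) ^ k * (-1 : ℝ) ^ (k + 1) = -1 := by
        rw [← pow_add]; exact Odd.neg_one_pow ⟨k, by ring⟩
      linear_combination (-(((k : ℝ) + 1) * Real.pi)) * h1
    have hganeg : g a < 0 := by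
      rw [hga]
      have : (0:ℝ) < k * Real.pi := by
        have : (1:ℝ) ≤ k := by exact_mod_cast hk
        nlinarith
      linarith
    have hgbpos : 0 < g b := by rw [hgb]; positivity
    have hcont : ContinuousOn g (Set.Icc a b) :=
      (continuous_const.mul ((Real.continuous_sin.sub (continuous_id.mul Real.continuous_cos)))).continuousOn
    have hmem : (0 : ℝ) ∈ g '' Set.Ioo a b := by
      apply intermediate_value_Ioo hab.le hcont
      exact ⟨hganeg, hgbpos⟩
    obtain ⟨x, hx, hgx⟩ := hmem
    refine ⟨x, ⟨hx, ?_⟩, ?_⟩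
    · have hne : ((-1 : ℝ) ^ k) ≠ 0 := by positivity
      have := mul_eq_zero.mp hgx
      tauto
    · rintro y ⟨hy, hfy⟩
      have hgy : g y = 0 := by simp [hg, hfy]
      exact hmono.injOn (Set.mem_Icc_of_Ioo hy) (Set.mem_Icc_of_Ioo hx) (by rw [hgy, hgx])
  · intro x hx
    set f : ℝ → ℝ := fun y => Real.sin y - y * Real.cos y with hf
    have hmono : StrictMonoOn f (Set.Icc 0 Real.pi) := by
      apply strictMonoOn_of_deriv_pos (convex_Icc 0 Real.pi)
      · exact ((Real.continuous_sin.sub (continuous_id.mul Real.continuous_cos))).continuousOn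
      · intro y hy
        rw [interior_Icc] at hy
        have hd : HasDerivAt f (y * Real.sin y) y := by
          have := deriv_aux (k := 0) y
          simpa [hf] using this
        rw [hd.deriv]
        exact mul_pos hy.1 (Real.sin_pos_of_pos_of_lt_pi hy.1 hy.2)
    have h0 : f 0 = 0 := by simp [hf]
    have : f 0 < f x := hmono (Set.left_mem_Icc.mpr pi_pos.le) ⟨hx.1.le, hx.2⟩ hx.1
    rw [h0] at this
    exact ne_of_gt this
end
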